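/- arXiv:2402.11222 — 5 statements merged into one kernel-verified Lean document; each statement's English description precedes it below -/
import Mathlib

section
/- Let d ≥ 2 be an integer and let G be a {K_{d,d}, P_4}-free graph. Then tree-α(G) ≤ d−1. -/
/-
Common definitions: tree decompositions, tree-independence number, treewidth,
independence/clique numbers, induced-subgraph freeness, and the special graphs
appearing in the paper "Treewidth versus clique number: induced minors,
distance to block graphs ... (tree-independence number)".
-/

namespace PaperTIN

open SimpleGraph

variable {V W : Type}

/-- A set of vertices is independent if no two of its members are adjacent. -/
def IsIndepSet (G : SimpleGraph V) (s : Set V) : Prop :=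
  s.Pairwise fun u v => ¬ G.Adj u v

/-- The maximum size of an independent set of `G` contained in `s`,
i.e. the independence number `α(G[s])` of the induced subgraph `G[s]`. -/
noncomputable def indepNumOn (G : SimpleGraph V) (s : Set V) : ℕ :=
  sSup {n | ∃ t : Finset V, ↑t ⊆ s ∧ IsIndepSet G ↑t ∧ t.card = n}

/-- The independence number `α(G)`. -/
noncomputable def indepNum (G : SimpleGraph V) : ℕ :=
  indepNumOn G Set.univ

/-- The maximum size of a clique of `G` contained in `s`,
i.e. the clique number `ω(G[s])` of the induced subgraph `G[s]`. -/
noncomputable def cliqueNumOn (G : SimpleGraph V) (s : Set V) : ℕ :=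
  sSup {n | ∃ t : Finset V, ↑t ⊆ s ∧ G.IsClique ↑t ∧ t.card = n}

/-- A tree decomposition of a graph `G`: a tree together with a bag for each node,
such that every vertex is in some bag, both endpoints of every edge lie in a common
bag, and for every vertex the set of nodes whose bag contains it induces a connected
(hence nonempty) subtree of the tree. -/
structure TreeDecomp {V : Type} (G : SimpleGraph V) where
  ι : Type
  tree : SimpleGraph ι
  isTree : tree.IsTree
  bag : ι → Set V
  bag_vert : ∀ v : V, ∃ t : ι, v ∈ bag t
  bag_edge : ∀ ⦃u v : V⦄, G.Adj u v → ∃ t : ι, u ∈ bag t ∧ v ∈ bag t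
  bag_conn : ∀ v : V, (tree.induce {t : ι | v ∈ bag t}).Connected

/-- The independence number of a tree decomposition: the maximum, over all bags,
of the independence number of the subgraph induced by the bag. -/
noncomputable def TreeDecomp.alpha {G : SimpleGraph V} (D : TreeDecomp G) : ℕ :=
  sSup {n | ∃ t : D.ι, n = indepNumOn G (D.bag t)}

/-- The tree-independence number `tree-α(G)`: the minimum independence number of a
tree decomposition of `G`. -/
noncomputable def treeIndepNum (G : SimpleGraph V) : ℕ :=
  sInf {n | ∃ D : TreeDecomp G, D.alpha = n}

/-- The width of a tree decomposition: maximum bag size minus one. -/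
noncomputable def TreeDecomp.width {G : SimpleGraph V} (D : TreeDecomp G) : ℕ :=
  sSup {n | ∃ t : D.ι, n = (D.bag t).ncard} - 1

/-- The treewidth `tw(G)`: the minimum width of a tree decomposition of `G`. -/
noncomputable def treewidth (G : SimpleGraph V) : ℕ :=
  sInf {n | ∃ D : TreeDecomp G, D.width = n}

/-- `Free H G` means that `G` has no induced subgraph isomorphic to `H`
(equivalently, there is no graph embedding of `H` into `G`). -/
def Free (H : SimpleGraph W) (G : SimpleGraph V) : Prop :=
  IsEmpty (H ↪g G)

/-- The star `K_{1,d}` with `d` leaves. -/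
def star (d : ℕ) : SimpleGraph (Fin 1 ⊕ Fin d) :=
  completeBipartiteGraph (Fin 1) (Fin d)

/-- The complete bipartite graph `K_{m,n}`. -/
def biclique (m n : ℕ) : SimpleGraph (Fin m ⊕ Fin n) :=
  completeBipartiteGraph (Fin m) (Fin n)

/-- The open neighborhood `N(X)` of a set of vertices: all vertices having a neighbor in `X`. -/
def nbhdSet (G : SimpleGraph V) (X : Set V) : Set V :=
  {v | ∃ x ∈ X, G.Adj x v}

/-- The closed neighborhood `N[X]` of a set of vertices. -/
def closedNbhdSet (G : SimpleGraph V) (X : Set V) : Set V :=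
  X ∪ nbhdSet G X

/-- `S_p`: the tree obtained from the claw `K_{1,3}` by subdividing each edge exactly
`p-1` times; equivalently a spider with three legs, each a path on `p` vertices,
attached to a center vertex. -/
def spider (p : ℕ) : SimpleGraph (Unit ⊕ Fin 3 × Fin p) :=
  SimpleGraph.fromRel fun a b =>
    (∃ j : Fin 3, ∃ i : Fin p, a = Sum.inl () ∧ b = Sum.inr (j, i) ∧ (i : ℕ) = 0) ∨
    (∃ j : Fin 3, ∃ i i' : Fin p, a = Sum.inr (j, i) ∧ b = Sum.inr (j, i') ∧
      (i' : ℕ) = (i : ℕ) + 1)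

/-- The disjoint union of `k` copies of a graph `H`. -/
def kCopies (k : ℕ) (H : SimpleGraph W) : SimpleGraph (Fin k × W) where
  Adj a b := a.1 = b.1 ∧ H.Adj a.2 b.2
  symm := ⟨by rintro a b ⟨h1, h2⟩; exact ⟨h1.symm, h2.symm⟩⟩
  loopless := ⟨by rintro a ⟨-, h⟩; exact H.loopless.irrefl _ h⟩

/-- Membership in the family `𝒮`: every connected component is a tree with at most three
leaves. Equivalently, the graph is a forest and each connected component contains at most
three vertices of degree one. -/
def InS [Fintype W] (S : SimpleGraph W) : Prop :=
  S.IsAcyclic ∧ ∀ c : S.ConnectedComponent,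
    {v : W | S.connectedComponentMk v = c ∧ (S.neighborSet v).ncard = 1}.ncard ≤ 3

/-- Membership in the family `L(𝒮)`: the graph is isomorphic to the line graph of some
member of `𝒮`. -/
def InLS [Fintype V] (T : SimpleGraph V) : Prop :=
  ∃ (W : Type) (_ : Fintype W) (S : SimpleGraph W),
    InS S ∧ Nonempty (T ≃g S.lineGraph)

/-- The induced biclique number of `G`: the largest `n` such that `G` contains an
induced subgraph isomorphic to `K_{n,n}`. -/
noncomputable def ibn (G : SimpleGraph V) : ℕ :=
  sSup {n | Nonempty (completeBipartiteGraph (Fin n) (Fin n) ↪g G)}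

/-- The `i`-th bag (0-indexed) of the `h`-backbone structure of an induced path
`f : P_ℓ ↪g G`: the closed neighborhood of the set of vertices
`{v_i, …, v_{i+h-1}}` of the path. -/
def backboneBag (G : SimpleGraph V) {ℓ : ℕ} (f : pathGraph ℓ ↪g G) (h i : ℕ) : Set V :=
  closedNbhdSet G (⇑f '' {j : Fin ℓ | i ≤ (j : ℕ) ∧ (j : ℕ) ≤ i + h - 1})

/-- The vertex set (as a set of vertices of the ambient graph) of a connected component
of the induced subgraph `G[s]`. -/
def componentVerts {G : SimpleGraph V} {s : Set V}
    (C : (G.induce s).ConnectedComponent) : Set V :=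
  Subtype.val '' {w : s | (G.induce s).connectedComponentMk w = C}

def natPath : SimpleGraph ℕ where
  Adj i j := i + 1 = j ∨ j + 1 = i
  symm := ⟨fun _ _ h => Or.symm h⟩
  loopless := ⟨fun i (h : i + 1 = i ∨ i + 1 = i) => by omega⟩

@[simp] lemma natPath_adj {i j : ℕ} : natPath.Adj i j ↔ i + 1 = j ∨ j + 1 = i := Iff.rfl

lemma natPath_reachable_zero (n : ℕ) : natPath.Reachable 0 n := by
  induction n with
  | zero => exact Reachable.refl 0
  | succ k ih => exact ih.trans (SimpleGraph.Adj.reachable (Or.inl rfl))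

lemma natPath_connected : natPath.Connected := by
  rw [connected_iff]
  exact ⟨fun a b => (natPath_reachable_zero a).symm.trans (natPath_reachable_zero b), ⟨0⟩⟩

lemma natPath_side {n : ℕ} : ∀ {a b : ℕ},
    (natPath \ fromEdgeSet {s(n, n+1)}).Reachable a b → (a ≤ n ↔ b ≤ n) := by
  intro a b h
  obtain ⟨w⟩ := h
  induction w with
  | nil => exact Iff.rfl
  | cons h p ih =>
    refine Iff.trans ?_ ih
    rw [sdiff_adj, fromEdgeSet_adj] at h
    obtain ⟨hadj, hne⟩ := h
    rcases hadj with h1 | h1 <;>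
    · constructor <;> intro hle <;> by_contra hgt <;>
      · push_neg at hgt
        apply hne
        refine ⟨by rw [Set.mem_singleton_iff, Sym2.eq_iff]; omega, by omega⟩

lemma natPath_isTree : natPath.IsTree := by
  refine ⟨natPath_connected, ?_⟩
  rw [isAcyclic_iff_forall_adj_isBridge]
  intro v w h
  rw [isBridge_iff]
  rcases h with h1 | h1
  · subst h1
    intro hr
    have := natPath_side hr
    omega
  · subst h1
    rw [Sym2.eq_swap]
    intro hr
    have := natPath_side hr.symm
    omega

lemma natPath_induce_connected (S : Set ℕ) (a : ℕ) (ha : a ∈ S)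
    (hlb : ∀ x ∈ S, a ≤ x) (hdown : ∀ x ∈ S, a < x → x - 1 ∈ S) :
    (natPath.induce S).Connected := by
  have key : ∀ x (hx : x ∈ S), (natPath.induce S).Reachable ⟨x, hx⟩ ⟨a, ha⟩ := by
    intro x
    induction x using Nat.strong_induction_on with
    | _ x ih =>
      intro hx
      rcases eq_or_lt_of_le (hlb x hx) with heq | hlt
      · subst heq; exact Reachable.refl _
      · have hx1 : x - 1 ∈ S := hdown x hx hlt
        have hadj : (natPath.induce S).Adj ⟨x, hx⟩ ⟨x - 1, hx1⟩ := by
          show natPath.Adj x (x-1)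
          simp only [natPath_adj]; omega
        exact (hadj.reachable).trans (ih (x - 1) (by omega) hx1)
  rw [connected_iff]
  exact ⟨fun u v => (key u.1 u.2).trans (key v.1 v.2).symm, ⟨⟨a, ha⟩⟩⟩

lemma no_P4 {G : SimpleGraph V} (h2 : Free (SimpleGraph.pathGraph 4) G)
    (w0 w1 w2 w3 : V) (d02 : w0 ≠ w2) (d03 : w0 ≠ w3) (d13 : w1 ≠ w3)
    (a01 : G.Adj w0 w1) (a12 : G.Adj w1 w2) (a23 : G.Adj w2 w3)
    (n02 : ¬ G.Adj w0 w2) (n03 : ¬ G.Adj w0 w3) (n13 : ¬ G.Adj w1 w3) : False := by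
  have d01 := a01.ne
  have d12 := a12.ne
  have d23 := a23.ne
  refine h2.false ⟨⟨![w0, w1, w2, w3], ?_⟩, ?_⟩
  · intro i j hij
    fin_cases i <;> fin_cases j <;> simp_all <;> tauto
  · intro i j
    show G.Adj (![w0, w1, w2, w3] i) (![w0, w1, w2, w3] j) ↔ _
    fin_cases i <;> fin_cases j <;>
      simp_all [pathGraph_adj, SimpleGraph.adj_comm] <;> omega

lemma no_Kdd {G : SimpleGraph V} {d : ℕ} (h1 : Free (biclique d d) G)
    (A B : Finset V) (hA : A.card = d) (hB : B.card = d) (hdisj : ∀ a ∈ A, a ∉ B)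
    (hAind : IsIndepSet G ↑A) (hBind : IsIndepSet G ↑B)
    (hcross : ∀ a ∈ A, ∀ b ∈ B, G.Adj a b) : False := by
  have eA := A.equivFinOfCardEq hA
  have eB := B.equivFinOfCardEq hB
  refine h1.false ⟨⟨Sum.elim (fun i => (eA.symm i : V)) (fun i => (eB.symm i : V)), ?_⟩, ?_⟩
  · rintro (i | i) (j | j) h <;> simp only [Sum.elim_inl, Sum.elim_inr] at h
    · have := Subtype.ext (α := V) h
      simp only [Sum.inl.injEq]
      exact eA.symm.injective this
    · exact absurd ((eB.symm j).2) (h ▸ hdisj _ (eA.symm i).2)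
    · exact absurd ((eB.symm i).2) (h ▸ hdisj _ (eA.symm j).2)
    · have := Subtype.ext (α := V) h
      simp only [Sum.inr.injEq]
      exact eB.symm.injective this
  · rintro (i | j) (i' | j')
    · refine iff_of_false (fun h => ?_) (by simp [biclique])
      exact hAind (eA.symm i).2 (eA.symm i').2 h.ne h
    · exact iff_of_true (hcross _ (eA.symm i).2 _ (eB.symm j').2) (by simp [biclique])
    · exact iff_of_true (hcross _ (eA.symm i').2 _ (eB.symm j).2).symm (by simp [biclique])
    · refine iff_of_false (fun h => ?_) (by simp [biclique])
      exact hBind (eB.symm j).2 (eB.symm j').2 h.ne h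

lemma split [DecidableEq V] {G : SimpleGraph V} (h2 : Free (SimpleGraph.pathGraph 4) G) :
    ∀ (s : Finset V), 2 ≤ s.card →
    ∃ A B : Finset V, A ∪ B = s ∧ Disjoint A B ∧ A.Nonempty ∧ B.Nonempty ∧
      ((∀ a ∈ A, ∀ b ∈ B, ¬ G.Adj a b) ∨ (∀ a ∈ A, ∀ b ∈ B, G.Adj a b)) := by
  classical
  intro s
  induction s using Finset.strongInduction with
  | _ s ih =>
  intro hs
  obtain ⟨v, hv⟩ : s.Nonempty := Finset.card_pos.mp (by omega)
  have hins : insert v (s.erase v) = s := Finset.insert_erase hv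
  have hcard' : (s.erase v).card + 1 = s.card := Finset.card_erase_add_one hv
  by_cases hone : (s.erase v).card = 1
  · obtain ⟨w, hw⟩ := Finset.card_eq_one.mp hone
    have hwv : w ≠ v := by
      have : w ∈ s.erase v := hw ▸ Finset.mem_singleton_self w
      exact (Finset.mem_erase.mp this).1
    have huni : ({v} : Finset V) ∪ {w} = s := by
      rw [← Finset.insert_eq, ← hw, hins]
    have hdisj : Disjoint ({v} : Finset V) {w} :=
      Finset.disjoint_singleton.mpr hwv.symm
    by_cases hadj : G.Adj v w
    · exact ⟨{v}, {w}, huni, hdisj, ⟨v, Finset.mem_singleton_self v⟩,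
        ⟨w, Finset.mem_singleton_self w⟩, Or.inr (by
          intro a ha b hb
          rw [Finset.mem_singleton] at ha hb
          subst ha; subst hb; exact hadj)⟩
    · exact ⟨{v}, {w}, huni, hdisj, ⟨v, Finset.mem_singleton_self v⟩,
        ⟨w, Finset.mem_singleton_self w⟩, Or.inl (by
          intro a ha b hb
          rw [Finset.mem_singleton] at ha hb
          subst ha; subst hb; exact hadj)⟩
  · have h2' : 2 ≤ (s.erase v).card := by omega
    obtain ⟨A, B, hAB, hd, hAne, hBne, hcase⟩ :=
      ih (s.erase v) (Finset.erase_ssubset hv) h2'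
    have hne_v : ∀ y ∈ A ∪ B, y ≠ v := fun y hy => (Finset.mem_erase.mp (hAB ▸ hy)).1
    have hvA : v ∉ A := fun h => hne_v v (Finset.mem_union_left _ h) rfl
    have hvB : v ∉ B := fun h => hne_v v (Finset.mem_union_right _ h) rfl
    have hnotB : ∀ a ∈ A, a ∉ B := fun a ha => Finset.disjoint_left.mp hd ha
    have hsins : insert v (A ∪ B) = s := by rw [hAB, hins]
    rcases hcase with hnc | hac
    · -- NoCross case
      by_cases h1 : ∃ x ∈ A, G.Adj v x
      case neg =>
        push_neg at h1
        refine ⟨A, insert v B, ?_, ?_, hAne, Finset.insert_nonempty _ _, Or.inl ?_⟩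
        · rw [Finset.union_insert, hsins]
        · rw [Finset.disjoint_insert_right]; exact ⟨hvA, hd⟩
        · intro a ha b hb
          rcases Finset.mem_insert.mp hb with rfl | hb
          · exact fun h => h1 a ha h.symm
          · exact hnc a ha b hb
      case pos =>
      by_cases h2x : ∃ x ∈ B, G.Adj v x
      case neg =>
        push_neg at h2x
        refine ⟨B, insert v A, ?_, ?_, hBne, Finset.insert_nonempty _ _, Or.inl ?_⟩
        · rw [Finset.union_insert, Finset.union_comm, hsins]
        · rw [Finset.disjoint_insert_right]
          exact ⟨hvB, hd.symm⟩
        · intro a ha b hb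
          rcases Finset.mem_insert.mp hb with rfl | hb
          · exact fun h => h2x a ha h.symm
          · exact fun h => hnc b hb a ha h.symm
      case pos =>
      obtain ⟨b, hbB, hvb⟩ := h2x
      obtain ⟨a, haA, hva⟩ := h1
      by_cases h3 : ∃ x ∈ A, ∃ y ∈ A, G.Adj v x ∧ ¬ G.Adj v y ∧ G.Adj x y
      · obtain ⟨x, hxA, y, hyA, hvx, hnvy, hxy⟩ := h3
        exact (no_P4 h2 y x v b (hne_v y (Finset.mem_union_left _ hyA))
          (fun h => hnotB y hyA (h ▸ hbB)) (fun h => hnotB x hxA (h ▸ hbB))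
          hxy.symm hvx.symm hvb (fun h => hnvy h.symm)
          (hnc y hyA b hbB) (hnc x hxA b hbB)).elim
      by_cases h4 : ∃ x ∈ B, ∃ y ∈ B, G.Adj v x ∧ ¬ G.Adj v y ∧ G.Adj x y
      · obtain ⟨x, hxB, y, hyB, hvx, hnvy, hxy⟩ := h4
        exact (no_P4 h2 y x v a (hne_v y (Finset.mem_union_right _ hyB))
          (fun h => hnotB a haA (h ▸ hyB)) (fun h => hnotB a haA (h ▸ hxB))
          hxy.symm hvx.symm hva (fun h => hnvy h.symm)
          (fun h => hnc a haA y hyB h.symm) (fun h => hnc a haA x hxB h.symm)).elim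
      push_neg at h3 h4
      by_cases h5 : ∃ y ∈ A, ¬ G.Adj v y
      · obtain ⟨y0, hy0, hny0⟩ := h5
        set A2 := A.filter (fun y => ¬ G.Adj v y) with hA2def
        have hy0A2 : y0 ∈ A2 := Finset.mem_filter.mpr ⟨hy0, hny0⟩
        have hA2sub : A2 ⊆ A := Finset.filter_subset _ _
        refine ⟨A2, (A \ A2) ∪ insert v B, ?_, ?_, ⟨y0, hy0A2⟩,
          Finset.Nonempty.inr (Finset.insert_nonempty _ _), Or.inl ?_⟩
        · rw [← Finset.union_assoc, Finset.union_sdiff_self_eq_union,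
            Finset.union_eq_right.mpr hA2sub, Finset.union_insert, hsins]
        · rw [Finset.disjoint_union_right, Finset.disjoint_insert_right]
          exact ⟨Finset.disjoint_sdiff, fun h => hvA (hA2sub h),
            Finset.disjoint_left.mpr (fun x hx hxB => hnotB x (hA2sub hx) hxB)⟩
        · intro c hc w hw
          have hcA : c ∈ A := hA2sub hc
          have hnvc : ¬ G.Adj v c := (Finset.mem_filter.mp hc).2
          rcases Finset.mem_union.mp hw with hw | hw
          · obtain ⟨hwA, hwn2⟩ := Finset.mem_sdiff.mp hw
            have hvw : G.Adj v w := by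
              by_contra hcon
              exact hwn2 (Finset.mem_filter.mpr ⟨hwA, hcon⟩)
            exact fun h => h3 w hwA c hcA hvw hnvc h.symm
          · rcases Finset.mem_insert.mp hw with rfl | hw
            · exact fun h => hnvc h.symm
            · exact hnc c hcA w hw
      by_cases h6 : ∃ y ∈ B, ¬ G.Adj v y
      · obtain ⟨y0, hy0, hny0⟩ := h6
        set B2 := B.filter (fun y => ¬ G.Adj v y) with hB2def
        have hy0B2 : y0 ∈ B2 := Finset.mem_filter.mpr ⟨hy0, hny0⟩
        have hB2sub : B2 ⊆ B := Finset.filter_subset _ _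
        refine ⟨B2, (B \ B2) ∪ insert v A, ?_, ?_, ⟨y0, hy0B2⟩,
          Finset.Nonempty.inr (Finset.insert_nonempty _ _), Or.inl ?_⟩
        · rw [← Finset.union_assoc, Finset.union_sdiff_self_eq_union,
            Finset.union_eq_right.mpr hB2sub, Finset.union_insert, Finset.union_comm B A, hsins]
        · rw [Finset.disjoint_union_right, Finset.disjoint_insert_right]
          exact ⟨Finset.disjoint_sdiff, fun h => hvB (hB2sub h),
            Finset.disjoint_left.mpr (fun x hx hxA => hnotB x hxA (hB2sub hx))⟩
        · intro c hc w hw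
          have hcB : c ∈ B := hB2sub hc
          have hnvc : ¬ G.Adj v c := (Finset.mem_filter.mp hc).2
          rcases Finset.mem_union.mp hw with hw | hw
          · obtain ⟨hwB, hwn2⟩ := Finset.mem_sdiff.mp hw
            have hvw : G.Adj v w := by
              by_contra hcon
              exact hwn2 (Finset.mem_filter.mpr ⟨hwB, hcon⟩)
            exact fun h => h4 w hwB c hcB hvw hnvc h.symm
          · rcases Finset.mem_insert.mp hw with rfl | hw
            · exact fun h => hnvc h.symm
            · exact fun h => hnc w hw c hcB h.symm
      · push_neg at h5 h6
        refine ⟨{v}, A ∪ B, ?_, ?_, ⟨v, Finset.mem_singleton_self v⟩,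
          Finset.Nonempty.inl hAne, Or.inr ?_⟩
        · rw [← Finset.insert_eq, hsins]
        · simp only [Finset.disjoint_singleton_left, Finset.mem_union]
          rintro (h | h)
          exacts [hvA h, hvB h]
        · intro c hc w hw
          rw [Finset.mem_singleton] at hc
          subst hc
          rcases Finset.mem_union.mp hw with hw | hw
          exacts [h5 w hw, h6 w hw]
    · -- AllCross case
      by_cases h1 : ∃ x ∈ A, ¬ G.Adj v x
      case neg =>
        push_neg at h1
        refine ⟨A, insert v B, ?_, ?_, hAne, Finset.insert_nonempty _ _, Or.inr ?_⟩
        · rw [Finset.union_insert, hsins]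
        · rw [Finset.disjoint_insert_right]; exact ⟨hvA, hd⟩
        · intro c hc w hw
          rcases Finset.mem_insert.mp hw with rfl | hw
          · exact (h1 c hc).symm
          · exact hac c hc w hw
      case pos =>
      by_cases h2x : ∃ x ∈ B, ¬ G.Adj v x
      case neg =>
        push_neg at h2x
        refine ⟨B, insert v A, ?_, ?_, hBne, Finset.insert_nonempty _ _, Or.inr ?_⟩
        · rw [Finset.union_insert, Finset.union_comm, hsins]
        · rw [Finset.disjoint_insert_right]; exact ⟨hvB, hd.symm⟩
        · intro c hc w hw
          rcases Finset.mem_insert.mp hw with rfl | hw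
          · exact (h2x c hc).symm
          · exact (hac w hw c hc).symm
      case pos =>
      obtain ⟨a, haA, hnva⟩ := h1
      obtain ⟨b, hbB, hnvb⟩ := h2x
      by_cases h3 : ∃ x ∈ A, ∃ y ∈ A, G.Adj v x ∧ ¬ G.Adj v y ∧ ¬ G.Adj x y
      · obtain ⟨x, hxA, y, hyA, hvx, hnvy, hnxy⟩ := h3
        exact (no_P4 h2 v x b y (fun h => hvB (h ▸ hbB))
          (fun h => (hne_v y (Finset.mem_union_left _ hyA)) h.symm)
          (fun h => hnxy (by rw [h] at hvx; exact absurd hvx hnvy))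
          hvx (hac x hxA b hbB) (hac y hyA b hbB).symm
          hnvb hnvy hnxy).elim
      by_cases h4 : ∃ x ∈ B, ∃ y ∈ B, G.Adj v x ∧ ¬ G.Adj v y ∧ ¬ G.Adj x y
      · obtain ⟨x, hxB, y, hyB, hvx, hnvy, hnxy⟩ := h4
        exact (no_P4 h2 v x a y (fun h => hvA (h ▸ haA))
          (fun h => (hne_v y (Finset.mem_union_right _ hyB)) h.symm)
          (fun h => hnxy (by rw [h] at hvx; exact absurd hvx hnvy))
          hvx (hac a haA x hxB).symm (hac a haA y hyB)
          hnva hnvy hnxy).elim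
      push_neg at h3 h4
      by_cases h5 : ∃ x ∈ A, G.Adj v x
      · obtain ⟨x0, hx0, hvx0⟩ := h5
        set A1 := A.filter (fun y => G.Adj v y) with hA1def
        have hx0A1 : x0 ∈ A1 := Finset.mem_filter.mpr ⟨hx0, hvx0⟩
        have hA1sub : A1 ⊆ A := Finset.filter_subset _ _
        refine ⟨A1, (A \ A1) ∪ insert v B, ?_, ?_, ⟨x0, hx0A1⟩,
          Finset.Nonempty.inr (Finset.insert_nonempty _ _), Or.inr ?_⟩
        · rw [← Finset.union_assoc, Finset.union_sdiff_self_eq_union,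
            Finset.union_eq_right.mpr hA1sub, Finset.union_insert, hsins]
        · rw [Finset.disjoint_union_right, Finset.disjoint_insert_right]
          exact ⟨Finset.disjoint_sdiff, fun h => hvA (hA1sub h),
            Finset.disjoint_left.mpr (fun x hx hxB => hnotB x (hA1sub hx) hxB)⟩
        · intro c hc w hw
          have hcA : c ∈ A := hA1sub hc
          have hvc : G.Adj v c := (Finset.mem_filter.mp hc).2
          rcases Finset.mem_union.mp hw with hw | hw
          · obtain ⟨hwA, hwn1⟩ := Finset.mem_sdiff.mp hw
            have hnvw : ¬ G.Adj v w := fun hcon => hwn1 (Finset.mem_filter.mpr ⟨hwA, hcon⟩)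
            exact h3 c hcA w hwA hvc hnvw
          · rcases Finset.mem_insert.mp hw with rfl | hw
            · exact hvc.symm
            · exact hac c hcA w hw
      by_cases h6 : ∃ x ∈ B, G.Adj v x
      · obtain ⟨x0, hx0, hvx0⟩ := h6
        set B1 := B.filter (fun y => G.Adj v y) with hB1def
        have hx0B1 : x0 ∈ B1 := Finset.mem_filter.mpr ⟨hx0, hvx0⟩
        have hB1sub : B1 ⊆ B := Finset.filter_subset _ _
        refine ⟨B1, (B \ B1) ∪ insert v A, ?_, ?_, ⟨x0, hx0B1⟩,
          Finset.Nonempty.inr (Finset.insert_nonempty _ _), Or.inr ?_⟩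
        · rw [← Finset.union_assoc, Finset.union_sdiff_self_eq_union,
            Finset.union_eq_right.mpr hB1sub, Finset.union_insert, Finset.union_comm B A, hsins]
        · rw [Finset.disjoint_union_right, Finset.disjoint_insert_right]
          exact ⟨Finset.disjoint_sdiff, fun h => hvB (hB1sub h),
            Finset.disjoint_left.mpr (fun x hx hxA => hnotB x hxA (hB1sub hx))⟩
        · intro c hc w hw
          have hcB : c ∈ B := hB1sub hc
          have hvc : G.Adj v c := (Finset.mem_filter.mp hc).2
          rcases Finset.mem_union.mp hw with hw | hw
          · obtain ⟨hwB, hwn1⟩ := Finset.mem_sdiff.mp hw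
            have hnvw : ¬ G.Adj v w := fun hcon => hwn1 (Finset.mem_filter.mpr ⟨hwB, hcon⟩)
            exact h4 c hcB w hwB hvc hnvw
          · rcases Finset.mem_insert.mp hw with rfl | hw
            · exact hvc.symm
            · exact (hac w hw c hcB).symm
      · push_neg at h5 h6
        refine ⟨{v}, A ∪ B, ?_, ?_, ⟨v, Finset.mem_singleton_self v⟩,
          Finset.Nonempty.inl hAne, Or.inl ?_⟩
        · rw [← Finset.insert_eq, hsins]
        · simp only [Finset.disjoint_singleton_left, Finset.mem_union]
          rintro (h | h)
          exacts [hvA h, hvB h]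
        · intro c hc w hw
          rw [Finset.mem_singleton] at hc
          subst hc
          rcases Finset.mem_union.mp hw with hw | hw
          exacts [h5 w hw, h6 w hw]

def Good (G : SimpleGraph V) (d : ℕ) (s : Finset V) (m : ℕ) (bag : ℕ → Set V) : Prop :=
  1 ≤ m ∧ (∀ i, bag i ⊆ ↑s) ∧ (∀ i, m ≤ i → bag i = ∅) ∧
  (∀ v ∈ s, ∃ a b : ℕ, a ≤ b ∧ b < m ∧ {i | v ∈ bag i} = Set.Icc a b) ∧
  (∀ u v : V, u ∈ s → v ∈ s → G.Adj u v → ∃ i, u ∈ bag i ∧ v ∈ bag i) ∧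
  (∀ i, ∀ t : Finset V, ↑t ⊆ bag i → IsIndepSet G ↑t → t.card ≤ d - 1)

lemma good_base [DecidableEq V] {G : SimpleGraph V} {d : ℕ} (hd : 2 ≤ d) (s : Finset V)
    (hs : s.card ≤ 1) : Good G d s 1 (fun i => if i = 0 then ↑s else ∅) := by
  refine ⟨le_rfl, ?_, ?_, ?_, ?_, ?_⟩
  · intro i
    by_cases h : i = 0 <;> simp [h]
  · intro i hi
    have : i ≠ 0 := by omega
    simp [this]
  · intro v hv
    refine ⟨0, 0, le_rfl, one_pos, ?_⟩
    ext i
    by_cases h : i = 0 <;> simp [h, hv]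
  · intro u v hu hv _
    exact ⟨0, by simpa using ⟨hu, hv⟩⟩
  · intro i t hts _
    by_cases h : i = 0
    · subst h
      simp only [if_pos rfl] at hts
      have : t ⊆ s := Finset.coe_subset.mp hts
      have := Finset.card_le_card this
      omega
    · simp only [if_neg h] at hts
      have : t = ∅ := by
        rw [← Finset.coe_eq_empty]
        exact Set.subset_empty_iff.mp hts
      simp [this]

lemma good_union [DecidableEq V] {G : SimpleGraph V} {d : ℕ} {A B : Finset V}
    {m1 m2 : ℕ} {bag1 bag2 : ℕ → Set V}
    (hdisj : ∀ a ∈ A, a ∉ B) (hnc : ∀ a ∈ A, ∀ b ∈ B, ¬ G.Adj a b)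
    (g1 : Good G d A m1 bag1) (g2 : Good G d B m2 bag2) :
    Good G d (A ∪ B) (m1 + m2) (fun i => if i < m1 then bag1 i else bag2 (i - m1)) := by
  obtain ⟨h1m, h1sub, h1emp, h1int, h1edge, h1a⟩ := g1
  obtain ⟨h2m, h2sub, h2emp, h2int, h2edge, h2a⟩ := g2
  have hAB : ∀ b ∈ B, b ∉ A := fun b hb ha => hdisj _ ha hb
  refine ⟨by omega, ?_, ?_, ?_, ?_, ?_⟩
  · intro i
    by_cases h : i < m1 <;> simp only [h, if_pos, if_neg, if_true, if_false, Finset.coe_union]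
    · exact (h1sub i).trans Set.subset_union_left
    · exact (h2sub _).trans Set.subset_union_right
  · intro i hi
    have h : ¬ i < m1 := by omega
    simp only [h, if_false, if_neg, not_false_iff]
    exact h2emp _ (by omega)
  · intro v hv
    rcases Finset.mem_union.mp hv with hv | hv
    · obtain ⟨a, b, hab, hbm, heq⟩ := h1int v hv
      have hmem : ∀ j, v ∈ bag1 j ↔ a ≤ j ∧ j ≤ b := by
        intro j
        rw [show (v ∈ bag1 j) = (j ∈ {i | v ∈ bag1 i}) from rfl, heq, Set.mem_Icc]
      refine ⟨a, b, hab, by omega, ?_⟩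
      ext i
      simp only [Set.mem_setOf_eq, Set.mem_Icc]
      by_cases h : i < m1
      · simp only [h, if_pos]
        exact hmem i
      · simp only [h, if_neg, not_false_iff]
        constructor
        · intro hvb
          exact absurd (h2sub _ hvb) (by simpa using hdisj v hv)
        · omega
    · obtain ⟨a, b, hab, hbm, heq⟩ := h2int v hv
      have hmem : ∀ j, v ∈ bag2 j ↔ a ≤ j ∧ j ≤ b := by
        intro j
        rw [show (v ∈ bag2 j) = (j ∈ {i | v ∈ bag2 i}) from rfl, heq, Set.mem_Icc]
      refine ⟨m1 + a, m1 + b, by omega, by omega, ?_⟩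
      ext i
      simp only [Set.mem_setOf_eq, Set.mem_Icc]
      by_cases h : i < m1
      · simp only [h, if_pos]
        constructor
        · intro hvb
          exact absurd (h1sub _ hvb) (by simpa using hAB v hv)
        · omega
      · simp only [h, if_neg, not_false_iff]
        rw [hmem]
        omega
  · intro u v hu hv hadj
    rcases Finset.mem_union.mp hu with hu | hu <;> rcases Finset.mem_union.mp hv with hv | hv
    · obtain ⟨i, hui, hvi⟩ := h1edge u v hu hv hadj
      have hi : i < m1 := by
        by_contra h
        rw [h1emp i (by omega)] at hui
        exact hui
      exact ⟨i, by simp only [hi, if_pos]; exact ⟨hui, hvi⟩⟩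
    · exact absurd hadj (hnc u hu v hv)
    · exact absurd hadj.symm (hnc v hv u hu)
    · obtain ⟨i, hui, hvi⟩ := h2edge u v hu hv hadj
      refine ⟨m1 + i, ?_⟩
      have h : ¬ m1 + i < m1 := by omega
      simp only [h, if_neg, not_false_iff, Nat.add_sub_cancel_left]
      exact ⟨hui, hvi⟩
  · intro i t hts hind
    by_cases h : i < m1
    · exact h1a i t (by simpa [h] using hts) hind
    · exact h2a (i - m1) t (by simpa [h] using hts) hind

lemma good_join [DecidableEq V] {G : SimpleGraph V} {d : ℕ} {A B : Finset V}
    {m : ℕ} {bag : ℕ → Set V}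
    (hdisj : ∀ a ∈ A, a ∉ B) (hcross : ∀ a ∈ A, ∀ b ∈ B, G.Adj a b)
    (hsmall : ∀ t : Finset V, ↑t ⊆ (↑A : Set V) → IsIndepSet G ↑t → t.card ≤ d - 1)
    (g : Good G d B m bag) :
    Good G d (A ∪ B) m (fun i => if i < m then bag i ∪ ↑A else ∅) := by
  obtain ⟨hm, hsub, hemp, hint, hedge, ha⟩ := g
  refine ⟨hm, ?_, ?_, ?_, ?_, ?_⟩
  · intro i
    by_cases h : i < m <;> simp only [h, if_pos, if_neg, not_false_iff, Finset.coe_union]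
    · exact Set.union_subset ((hsub i).trans Set.subset_union_right) Set.subset_union_left
    · exact Set.empty_subset _
  · intro i hi
    have h : ¬ i < m := by omega
    simp [h]
  · intro v hv
    rcases Finset.mem_union.mp hv with hv | hv
    · refine ⟨0, m - 1, by omega, by omega, ?_⟩
      ext i
      simp only [Set.mem_setOf_eq, Set.mem_Icc]
      by_cases h : i < m <;> simp only [h, if_pos, if_neg, not_false_iff]
      · simp only [Set.mem_union, Finset.mem_coe]
        constructor
        · intro; omega
        · intro; exact Or.inr hv
      · simp only [Set.mem_empty_iff_false, false_iff]
        omega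
    · obtain ⟨a, b, hab, hbm, heq⟩ := hint v hv
      have hmem : ∀ j, v ∈ bag j ↔ a ≤ j ∧ j ≤ b := by
        intro j
        rw [show (v ∈ bag j) = (j ∈ {i | v ∈ bag i}) from rfl, heq, Set.mem_Icc]
      have hvA : v ∉ (↑A : Set V) := by simpa using fun h => hdisj v h hv
      refine ⟨a, b, hab, hbm, ?_⟩
      ext i
      simp only [Set.mem_setOf_eq, Set.mem_Icc]
      by_cases h : i < m <;> simp only [h, if_pos, if_neg, not_false_iff]
      · rw [Set.mem_union]
        constructor
        · rintro (hh | hh)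
          · exact (hmem i).mp hh
          · exact absurd (Finset.mem_coe.mp hh) (fun hx => hdisj v hx hv)
        · exact fun hh => Or.inl ((hmem i).mpr hh)
      · simp only [Set.mem_empty_iff_false, false_iff]
        omega
  · intro u v hu hv hadj
    rcases Finset.mem_union.mp hu with hu | hu <;> rcases Finset.mem_union.mp hv with hv | hv
    · refine ⟨0, ?_⟩
      have h0 : 0 < m := hm
      simp only [h0, if_pos]
      exact ⟨Set.mem_union_right _ (Finset.mem_coe.mpr hu),
        Set.mem_union_right _ (Finset.mem_coe.mpr hv)⟩
    · obtain ⟨a, b, hab, hbm, heq⟩ := hint v hv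
      have hva : v ∈ bag a := by
        rw [show (v ∈ bag a) = (a ∈ {i | v ∈ bag i}) from rfl, heq]
        exact Set.mem_Icc.mpr ⟨le_rfl, hab⟩
      have h : a < m := by omega
      exact ⟨a, by simp only [h, if_pos]; exact ⟨Set.mem_union_right _ (Finset.mem_coe.mpr hu),
        Set.mem_union_left _ hva⟩⟩
    · obtain ⟨a, b, hab, hbm, heq⟩ := hint u hu
      have hua : u ∈ bag a := by
        rw [show (u ∈ bag a) = (a ∈ {i | u ∈ bag i}) from rfl, heq]
        exact Set.mem_Icc.mpr ⟨le_rfl, hab⟩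
      have h : a < m := by omega
      exact ⟨a, by simp only [h, if_pos]; exact ⟨Set.mem_union_left _ hua,
        Set.mem_union_right _ (Finset.mem_coe.mpr hv)⟩⟩
    · obtain ⟨i, hui, hvi⟩ := hedge u v hu hv hadj
      have h : i < m := by
        by_contra h
        rw [hemp i (by omega)] at hui
        exact hui
      exact ⟨i, by simp only [h, if_pos]; exact ⟨Set.mem_union_left _ hui,
        Set.mem_union_left _ hvi⟩⟩
  · intro i t hts hind
    by_cases h : i < m
    · simp only [h, if_pos] at hts
      by_cases hall : ∀ x ∈ t, x ∈ (↑A : Set V)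
      · exact hsmall t (fun x hx => hall x hx) hind
      · push_neg at hall
        obtain ⟨y, hyt, hyA⟩ := hall
        have hyb : y ∈ bag i := by
          rcases hts hyt with hh | hh
          · exact hh
          · exact absurd hh hyA
        have hyB : y ∈ B := hsub i hyb
        have hsub2 : ↑t ⊆ bag i := by
          intro x hx
          rcases hts hx with hh | hh
          · exact hh
          · exfalso
            have hxA : x ∈ A := hh
            have hxy : x ≠ y := fun hcon => hyA (hcon ▸ hh)
            exact hind hx (Finset.mem_coe.mpr hyt) hxy (hcross x hxA y hyB)
        exact ha i t hsub2 hind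
    · simp only [h, if_neg, not_false_iff] at hts
      have : t = ∅ := by
        rw [← Finset.coe_eq_empty]
        exact Set.subset_empty_iff.mp hts
      simp [this]

lemma big_both_absurd [DecidableEq V] {G : SimpleGraph V} {d : ℕ} (hd : 2 ≤ d)
    (h1 : Free (biclique d d) G) {A B : Finset V}
    (hdisj : ∀ a ∈ A, a ∉ B) (hac : ∀ a ∈ A, ∀ b ∈ B, G.Adj a b)
    (hA : ¬ ∀ t : Finset V, ↑t ⊆ (↑A : Set V) → IsIndepSet G ↑t → t.card ≤ d - 1) :
    ∀ t : Finset V, ↑t ⊆ (↑B : Set V) → IsIndepSet G ↑t → t.card ≤ d - 1 := by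
  push_neg at hA
  obtain ⟨tA, hsubA, hindA, hcardA⟩ := hA
  by_contra hB
  push_neg at hB
  obtain ⟨tB, hsubB, hindB, hcardB⟩ := hB
  obtain ⟨uA, huA, hcA⟩ := Finset.exists_subset_card_eq (s := tA) (n := d) (by omega)
  obtain ⟨uB, huB, hcB⟩ := Finset.exists_subset_card_eq (s := tB) (n := d) (by omega)
  have huAA : ∀ x ∈ uA, x ∈ A := fun x hx => Finset.mem_coe.mp (hsubA (Finset.mem_coe.mpr (huA hx)))
  have huBB : ∀ x ∈ uB, x ∈ B := fun x hx => Finset.mem_coe.mp (hsubB (Finset.mem_coe.mpr (huB hx)))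
  exact no_Kdd h1 uA uB hcA hcB
    (fun a ha hb => hdisj a (huAA a ha) (huBB a hb))
    (hindA.mono (Finset.coe_subset.mpr huA))
    (hindB.mono (Finset.coe_subset.mpr huB))
    (fun a ha b hb => hac a (huAA a ha) b (huBB b hb))

lemma exists_good [DecidableEq V] {G : SimpleGraph V} {d : ℕ} (hd : 2 ≤ d)
    (h1 : Free (biclique d d) G) (h2 : Free (SimpleGraph.pathGraph 4) G) :
    ∀ n (s : Finset V), s.card ≤ n → ∃ m bag, Good G d s m bag := by
  intro n
  induction n with
  | zero =>
    intro s hs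
    exact ⟨1, _, good_base hd s (by omega)⟩
  | succ n ih =>
    intro s hs
    by_cases hs1 : s.card ≤ 1
    · exact ⟨1, _, good_base hd s hs1⟩
    · obtain ⟨A, B, hU, hdj, hAne, hBne, hcase⟩ := split h2 s (by omega)
      have hdisj : ∀ a ∈ A, a ∉ B := fun a ha => Finset.disjoint_left.mp hdj ha
      have hcards : A.card + B.card = s.card := by
        rw [← hU]
        exact (Finset.card_union_of_disjoint hdj).symm
      have hAn : A.card ≤ n := by have := Finset.card_pos.mpr hBne; omega
      have hBn : B.card ≤ n := by have := Finset.card_pos.mpr hAne; omega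
      rcases hcase with hnc | hac
      · obtain ⟨m1, bag1, g1⟩ := ih A hAn
        obtain ⟨m2, bag2, g2⟩ := ih B hBn
        exact ⟨m1 + m2, _, hU ▸ good_union hdisj hnc g1 g2⟩
      · by_cases hAs : ∀ t : Finset V, ↑t ⊆ (↑A : Set V) → IsIndepSet G ↑t → t.card ≤ d - 1
        · obtain ⟨m2, bag2, g2⟩ := ih B hBn
          exact ⟨m2, _, hU ▸ good_join hdisj hac hAs g2⟩
        · have hBs := big_both_absurd hd h1 hdisj hac hAs
          obtain ⟨m1, bag1, g1⟩ := ih A hAn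
          have hdisj' : ∀ b ∈ B, b ∉ A := fun b hb ha => hdisj b ha hb
          have hac' : ∀ b ∈ B, ∀ a ∈ A, G.Adj b a := fun b hb a ha => (hac a ha b hb).symm
          have hBA : B ∪ A = s := by rw [Finset.union_comm]; exact hU
          exact ⟨m1, _, hBA ▸ good_join hdisj' hac' hBs g1⟩

/-- Let `d ≥ 2` be an integer and let `G` be a `{K_{d,d}, P_4}`-free
graph. Then `tree-α(G) ≤ d−1`. -/

theorem treeIndepNum_le_of_biclique_P4_free
    (d : ℕ) (hd : 2 ≤ d) {V : Type} [Fintype V] (G : SimpleGraph V)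
    (h1 : Free (biclique d d) G) (h2 : Free (SimpleGraph.pathGraph 4) G) :
    treeIndepNum G ≤ d - 1 := by
  classical
  obtain ⟨m, bag, hm, hsub, hemp, hint, hedge, hal⟩ :=
    exists_good hd h1 h2 Finset.univ.card Finset.univ le_rfl
  set D : TreeDecomp G :=
    { ι := ℕ
      tree := natPath
      isTree := natPath_isTree
      bag := fun i => bag (min i (m - 1))
      bag_vert := by
        intro v
        obtain ⟨a, b, hab, hbm, heq⟩ := hint v (Finset.mem_univ v)
        refine ⟨a, ?_⟩
        show v ∈ bag (min a (m - 1))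
        have hma : min a (m - 1) = a := by omega
        rw [hma]
        have : a ∈ {i | v ∈ bag i} := by
          rw [heq]; exact Set.mem_Icc.mpr ⟨le_rfl, hab⟩
        exact this
      bag_edge := by
        intro u v hadj
        obtain ⟨i, hui, hvi⟩ := hedge u v (Finset.mem_univ u) (Finset.mem_univ v) hadj
        have hi : i < m := by
          by_contra h
          rw [hemp i (by omega)] at hui
          exact hui
        have hmi : min i (m - 1) = i := by omega
        refine ⟨i, ?_, ?_⟩
        · show u ∈ bag (min i (m - 1))
          rw [hmi]; exact hui
        · show v ∈ bag (min i (m - 1))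
          rw [hmi]; exact hvi
      bag_conn := by
        intro v
        obtain ⟨a, b, hab, hbm, heq⟩ := hint v (Finset.mem_univ v)
        have hmem : ∀ j, v ∈ bag j ↔ a ≤ j ∧ j ≤ b := by
          intro j
          rw [show (v ∈ bag j) = (j ∈ {i | v ∈ bag i}) from rfl, heq, Set.mem_Icc]
        apply natPath_induce_connected {t : ℕ | v ∈ bag (min t (m - 1))} a
        · show v ∈ bag (min a (m - 1))
          rw [hmem]
          omega
        · intro x hx
          have hh := (hmem _).mp hx
          omega
        · intro x hx hax
          have hh := (hmem _).mp hx
          show v ∈ bag (min (x - 1) (m - 1))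
          rw [hmem]
          omega }
  have halpha : D.alpha ≤ d - 1 := by
    show sSup {n | ∃ t : ℕ, n = indepNumOn G (bag (min t (m - 1)))} ≤ d - 1
    refine csSup_le ⟨indepNumOn G (bag (min 0 (m - 1))), ⟨0, rfl⟩⟩ ?_
    rintro n ⟨t, rfl⟩
    apply csSup_le
    · refine ⟨0, ∅, ?_, ?_, rfl⟩
      · simp
      · simp [IsIndepSet]
    · rintro n ⟨u, hus, hind, rfl⟩
      exact hal _ u hus hind
  exact le_trans (Nat.sInf_le ⟨D, rfl⟩) halpha

end PaperTIN
end

section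
/- Let d ≥ 1 and q ≥ 3 be integers, let G be a connected K_{1,d}-free graph with no induced cycle of length at least q, let P be an induced path in G, and let v ∈ V(G) \ V(P). Then there exists a (possibly empty) subpath P_v of P with at most 2(d−1)(q−2) vertices such that every neighbor of v on P belongs to P_v and each endpoint of P_v is adjacent to v. -/
/-
Common definitions: tree decompositions, tree-independence number, treewidth,
independence/clique numbers, induced-subgraph freeness, and the special graphs
appearing in the paper "Treewidth versus clique number: induced minors,
distance to block graphs ... (tree-independence number)".
-/

namespace PaperTIN

open SimpleGraph

variable {V W : Type}

lemma fin_eq_one_add {n : ℕ} (u v : Fin (n+2)) :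
    (u = 1 + v) ↔ ((v:ℕ)+1 = u ∨ ((v:ℕ) = n+1 ∧ (u:ℕ) = 0)) := by
  rw [Fin.ext_iff, Fin.val_add]
  have hv := v.isLt; have hu := u.isLt
  rcases Nat.lt_or_ge ((v:ℕ)+1) (n+2) with h | h
  · rw [Fin.val_one, Nat.mod_eq_of_lt (by omega)]; omega
  · have h1 : (v:ℕ) = n+1 := by omega
    rw [Fin.val_one, h1]
    have h2 : (1 + (n+1)) % (n+2) = 0 := by
      rw [show 1+(n+1) = n+2 from by omega, Nat.mod_self]
    rw [h2]; omega

lemma cycle_adj_iff {n : ℕ} (u v : Fin (n+2)) :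
    (cycleGraph (n+2)).Adj u v ↔
      ((u:ℕ)+1 = v ∨ (v:ℕ)+1 = u ∨ ((u:ℕ) = 0 ∧ (v:ℕ) = n+1) ∨ ((v:ℕ) = 0 ∧ (u:ℕ) = n+1)) := by
  rw [cycleGraph_adj, sub_eq_iff_eq_add, sub_eq_iff_eq_add, fin_eq_one_add, fin_eq_one_add]
  omega

lemma star_embeds {V : Type} (G : SimpleGraph V) {d : ℕ} (v : V) (g : Fin d → V)
    (hinj : Function.Injective g) (hne : ∀ k, g k ≠ v)
    (hadj : ∀ k, G.Adj v (g k))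
    (hind : ∀ k k', k ≠ k' → ¬ G.Adj (g k) (g k')) :
    Nonempty (completeBipartiteGraph (Fin 1) (Fin d) ↪g G) := by
  refine ⟨⟨⟨Sum.elim (fun _ => v) g, ?_⟩, ?_⟩⟩
  · rintro (a | a) (b | b) h
    · exact congrArg Sum.inl (Subsingleton.elim a b)
    · exact absurd (Sum.elim_inl (fun _ => v) g a ▸ h :
        v = g b).symm (hne b)
    · exact absurd (h : g a = v) (hne a)
    · exact congrArg Sum.inr (hinj h)
  · rintro (a | a) (b | b) <;>
      simp only [Function.Embedding.coeFn_mk, Sum.elim_inl, Sum.elim_inr,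
        completeBipartiteGraph, Sum.isLeft_inl, Sum.isRight_inl, Sum.isLeft_inr,
        Sum.isRight_inr]
    · simp; exact G.loopless.irrefl v
    · simp [hadj b]; exact hadj b
    · simp [(hadj a).symm]; exact (hadj a).symm
    · simp only [Bool.false_eq_true, and_false, false_and, or_self, iff_false]
      intro h
      rcases eq_or_ne a b with rfl | hab
      · exact G.loopless.irrefl _ h
      · exact hind a b hab h

lemma gap_le {V : Type} (G : SimpleGraph V) (q : ℕ) (hq : 3 ≤ q)
    (hcyc : ∀ m : ℕ, q ≤ m → IsEmpty (SimpleGraph.cycleGraph m ↪g G))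
    {n : ℕ} (f : SimpleGraph.pathGraph n ↪g G) (v : V) (hv : v ∉ Set.range ⇑f)
    (i j : Fin n) (hij : i < j) (hi : G.Adj v (f i)) (hj : G.Adj v (f j))
    (hbet : ∀ k : Fin n, i < k → k < j → ¬ G.Adj v (f k)) :
    (j:ℕ) - (i:ℕ) ≤ q - 3 := by
  by_contra hcon
  have hjn := j.isLt
  have hij' : (i:ℕ) < (j:ℕ) := hij
  set g : ℕ := (j:ℕ) - (i:ℕ) with hg
  have hg1 : 1 ≤ g := by omega
  have hm : q ≤ g + 2 := by omega
  set c : Fin (g+2) → V :=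
    Fin.cases v (fun t : Fin (g+1) => f ⟨(i:ℕ)+(t:ℕ), by have := t.isLt; omega⟩) with hc
  have hcinj : Function.Injective c := by
    intro a b h
    induction a using Fin.cases with
    | zero =>
      induction b using Fin.cases with
      | zero => rfl
      | succ t =>
        rw [hc] at h; simp only [Fin.cases_zero, Fin.cases_succ] at h
        exact absurd ⟨_, h.symm⟩ hv
    | succ s =>
      induction b using Fin.cases with
      | zero =>
        rw [hc] at h; simp only [Fin.cases_zero, Fin.cases_succ] at h
        exact absurd ⟨_, h⟩ hv
      | succ t =>
        rw [hc] at h; simp only [Fin.cases_succ] at h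
        have := f.injective h
        have h2 : (i:ℕ)+(s:ℕ) = (i:ℕ)+(t:ℕ) := congrArg Fin.val this
        have : (s:ℕ) = (t:ℕ) := by omega
        exact congrArg Fin.succ (Fin.ext this)
  have hadj : ∀ a b : Fin (g+2), G.Adj (c a) (c b) ↔ (cycleGraph (g+2)).Adj a b := by
    intro a b
    induction a using Fin.cases with
    | zero =>
      induction b using Fin.cases with
      | zero => simp [hc]
      | succ t =>
        rw [hc]; simp only [Fin.cases_zero, Fin.cases_succ]
        rw [cycle_adj_iff]
        have ht := t.isLt
        simp only [Fin.val_zero, Fin.val_succ]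
        constructor
        · intro h
          by_contra hcon2
          push_neg at hcon2
          simp only [true_implies, forall_true_left] at hcon2
          have h0 : 0 < (t:ℕ) := by omega
          have hg0 : (t:ℕ) < g := by omega
          have hb : (i:ℕ)+(t:ℕ) < n := by omega
          exact hbet ⟨(i:ℕ)+(t:ℕ), hb⟩ (by show (i:ℕ) < (i:ℕ)+(t:ℕ); omega)
            (by show (i:ℕ)+(t:ℕ) < (j:ℕ); omega) h
        · rintro (h | h | ⟨-, h⟩ | ⟨h, -⟩)
          · have ht0 : (t:ℕ) = 0 := by omega
            have : (⟨(i:ℕ)+(t:ℕ), by omega⟩ : Fin n) = i := by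
              apply Fin.ext; simp [ht0]
            rw [this]; exact hi
          · omega
          · have : (⟨(i:ℕ)+(t:ℕ), by omega⟩ : Fin n) = j := by
              apply Fin.ext; simp; omega
            rw [this]; exact hj
          · omega
    | succ s =>
      induction b using Fin.cases with
      | zero =>
        rw [hc]; simp only [Fin.cases_zero, Fin.cases_succ]
        rw [cycle_adj_iff]
        have hs := s.isLt
        simp only [Fin.val_zero, Fin.val_succ]
        rw [G.adj_comm]
        constructor
        · intro h
          by_contra hcon2
          push_neg at hcon2
          simp only [true_implies, forall_true_left] at hcon2
          have hb : (i:ℕ)+(s:ℕ) < n := by omega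
          exact hbet ⟨(i:ℕ)+(s:ℕ), hb⟩ (by show (i:ℕ) < (i:ℕ)+(s:ℕ); omega)
            (by show (i:ℕ)+(s:ℕ) < (j:ℕ); omega) h
        · rintro (h | h | ⟨h, -⟩ | ⟨-, h⟩)
          · omega
          · have hs0 : (s:ℕ) = 0 := by omega
            have : (⟨(i:ℕ)+(s:ℕ), by omega⟩ : Fin n) = i := by
              apply Fin.ext; simp [hs0]
            rw [this]; exact hi
          · omega
          · have : (⟨(i:ℕ)+(s:ℕ), by omega⟩ : Fin n) = j := by
              apply Fin.ext; simp; omega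
            rw [this]; exact hj
      | succ t =>
        rw [hc]; simp only [Fin.cases_succ]
        rw [f.map_adj_iff, pathGraph_adj, cycle_adj_iff]
        have hs := s.isLt; have ht := t.isLt
        simp only [Fin.val_succ]
        omega
  exact (hcyc (g+2) hm).false ⟨⟨c, hcinj⟩, hadj _ _⟩

theorem main_aux
    (d q : ℕ) (hd : 1 ≤ d) (hq : 3 ≤ q) {V : Type} [Fintype V]
    (G : SimpleGraph V) (hconn : G.Connected)
    (hfree : IsEmpty (completeBipartiteGraph (Fin 1) (Fin d) ↪g G))
    (hcyc : ∀ m : ℕ, q ≤ m → IsEmpty (SimpleGraph.cycleGraph m ↪g G))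
    {n : ℕ} (f : SimpleGraph.pathGraph n ↪g G) (v : V) (hv : v ∉ Set.range ⇑f) :
    (∀ i : Fin n, ¬ G.Adj v (f i)) ∨
    ∃ a b : Fin n, a ≤ b ∧ (b : ℕ) - (a : ℕ) + 1 ≤ 2 * (d - 1) * (q - 2) ∧
      (∀ i : Fin n, G.Adj v (f i) → a ≤ i ∧ i ≤ b) ∧
      G.Adj v (f a) ∧ G.Adj v (f b) := by
  classical
  -- star_embeds for a single neighbor rules out d = 1
  rcases Nat.lt_or_ge d 2 with hd1 | hd2
  · have hd1 : d = 1 := by omega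
    subst hd1
    left
    intro i hadj
    exact hfree.false (star_embeds G v (fun _ => f i)
      (fun a b _ => Subsingleton.elim a b)
      (fun _ h => hv ⟨i, h⟩) (fun _ => hadj)
      (fun k k' hkk => absurd (Subsingleton.elim k k') hkk)).some
  by_cases hex : ∃ i : Fin n, G.Adj v (f i)
  swap
  · left; push_neg at hex; exact hex
  right
  set S : Finset (Fin n) := Finset.univ.filter (fun i => G.Adj v (f i)) with hS
  have hmemS : ∀ i : Fin n, i ∈ S ↔ G.Adj v (f i) := by
    intro i; simp [hS]
  obtain ⟨i0, hi0⟩ := hex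
  have hSne : S.Nonempty := ⟨i0, (hmemS i0).2 hi0⟩
  have hN1 : 1 ≤ S.card := Finset.card_pos.2 hSne
  set N := S.card with hN
  let e := S.orderIsoOfFin hN.symm
  set E : Fin N → Fin n := fun t => (e t : Fin n) with hE
  have hEmem : ∀ t, E t ∈ S := fun t => (e t).2
  have hElt : ∀ {a b : Fin N}, a < b → E a < E b := by
    intro a b h
    exact Subtype.coe_lt_coe.2 (e.lt_iff_lt.2 h)
  have hEle : ∀ {a b : Fin N}, a ≤ b → E a ≤ E b := by
    intro a b h
    exact Subtype.coe_le_coe.2 (e.le_iff_le.2 h)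
  have hEsurj : ∀ x ∈ S, ∃ t : Fin N, E t = x := by
    intro x hx
    exact ⟨e.symm ⟨x, hx⟩, congrArg Subtype.val (e.apply_symm_apply ⟨x, hx⟩)⟩
  -- Count bound: N ≤ 2*(d-1)
  have hNle : N ≤ 2 * (d - 1) := by
    by_contra hcon
    push_neg at hcon
    have hNd : 2 * d - 1 ≤ N := by omega
    have hlt : ∀ k : Fin d, 2 * (k : ℕ) < N := by
      intro k; have := k.isLt; omega
    set g : Fin d → V := fun k => f (E ⟨2 * (k:ℕ), hlt k⟩) with hg
    have key : ∀ k k' : Fin d, (k:ℕ) < (k':ℕ) →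
        (E ⟨2*(k:ℕ), hlt k⟩ : ℕ) + 2 ≤ (E ⟨2*(k':ℕ), hlt k'⟩ : ℕ) := by
      intro k k' hkk
      have h1 : 2*(k:ℕ)+1 < N := by have := hlt k'; omega
      have l1 : E ⟨2*(k:ℕ), hlt k⟩ < E ⟨2*(k:ℕ)+1, h1⟩ :=
        hElt (by simp [Fin.lt_def])
      have l2 : E ⟨2*(k:ℕ)+1, h1⟩ < E ⟨2*(k':ℕ), hlt k'⟩ :=
        hElt (by simp [Fin.lt_def]; omega)
      have l1' : ((E ⟨2*(k:ℕ), hlt k⟩ : Fin n) : ℕ) < E ⟨2*(k:ℕ)+1, h1⟩ := l1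
      have l2' : ((E ⟨2*(k:ℕ)+1, h1⟩ : Fin n) : ℕ) < E ⟨2*(k':ℕ), hlt k'⟩ := l2
      omega
    have hnadj : ∀ k k' : Fin d, k ≠ k' → ¬ G.Adj (g k) (g k') := by
      intro k k' hkk hadj
      rw [hg] at hadj
      simp only at hadj
      rw [f.map_adj_iff, pathGraph_adj] at hadj
      rcases Nat.lt_or_ge (k:ℕ) (k':ℕ) with h | h
      · have := key k k' h; omega
      · have hne : (k':ℕ) < (k:ℕ) := by
          rcases Nat.lt_or_ge (k':ℕ) (k:ℕ) with h2 | h2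
          · exact h2
          · exact absurd (Fin.ext (by omega)) hkk
        have := key k' k hne; omega
    exact hfree.false (star_embeds G v g
      (by
        intro a b h
        rw [hg] at h; simp only at h
        have := f.injective h
        have h2 : (2*(a:ℕ)) = (2*(b:ℕ)) := by
          have h3 : E ⟨2*(a:ℕ), hlt a⟩ = E ⟨2*(b:ℕ), hlt b⟩ := this
          rcases lt_trichotomy (2*(a:ℕ)) (2*(b:ℕ)) with h4 | h4 | h4
          · exact absurd h3 (ne_of_lt (hElt (Fin.mk_lt_mk.2 (by omega))))
          · exact h4
          · exact absurd h3.symm (ne_of_lt (hElt (Fin.mk_lt_mk.2 (by omega))))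
        exact Fin.ext (by omega)
      )
      (fun k h => hv ⟨_, h⟩)
      (fun k => (hmemS _).1 (hEmem _))
      hnadj).some
  -- Telescoping bound
  have h0N : 0 < N := hN1
  have tel : ∀ k : ℕ, (hk : k < N) →
      ((E ⟨k, hk⟩ : Fin n) : ℕ) ≤ ((E ⟨0, h0N⟩ : Fin n) : ℕ) + k * (q - 3) := by
    intro k
    induction k with
    | zero => intro hk; simp
    | succ k ih =>
      intro hk
      have hk' : k < N := by omega
      have ihk := ih hk'
      have hlt2 : E ⟨k, hk'⟩ < E ⟨k+1, hk⟩ := hElt (by simp [Fin.lt_def])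
      have hbet : ∀ z : Fin n, E ⟨k, hk'⟩ < z → z < E ⟨k+1, hk⟩ → ¬ G.Adj v (f z) := by
        intro z h1 h2 hadj
        obtain ⟨t, ht⟩ := hEsurj z ((hmemS z).2 hadj)
        subst ht
        have ht1 : (⟨k, hk'⟩ : Fin N) < t := by
          by_contra hcon2
          push_neg at hcon2
          exact absurd (hEle hcon2) (not_le.2 h1)
        have ht2 : t < (⟨k+1, hk⟩ : Fin N) := by
          by_contra hcon2
          push_neg at hcon2
          exact absurd (hEle hcon2) (not_le.2 h2)
        have : (k:ℕ) < (t:ℕ) := ht1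
        have : (t:ℕ) < k+1 := ht2
        omega
      have hgap := gap_le G q hq hcyc f v hv (E ⟨k, hk'⟩) (E ⟨k+1, hk⟩) hlt2
        ((hmemS _).1 (hEmem _)) ((hmemS _).1 (hEmem _)) hbet
      have hlt2' : ((E ⟨k, hk'⟩ : Fin n) : ℕ) < E ⟨k+1, hk⟩ := hlt2
      have hq3 : 3 ≤ q := hq
      have hmul : (k+1)*(q-3) = k*(q-3) + (q-3) := by ring
      omega
  have hN1lt : N - 1 < N := by omega
  refine ⟨E ⟨0, h0N⟩, E ⟨N-1, hN1lt⟩, hEle (by simp [Fin.le_def]), ?_, ?_, ?_, ?_⟩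
  · have := tel (N-1) hN1lt
    have hmono : ((E ⟨0, h0N⟩ : Fin n) : ℕ) ≤ E ⟨N-1, hN1lt⟩ :=
      hEle (by simp [Fin.le_def])
    obtain ⟨d', rfl⟩ : ∃ d', d = d' + 2 := ⟨d - 2, by omega⟩
    obtain ⟨q', rfl⟩ : ∃ q', q = q' + 3 := ⟨q - 3, by omega⟩
    have h1 : (N - 1) ≤ 2*d' + 1 := by omega
    have h2 : (N-1) * (q'+3-3) ≤ (2*d'+1) * q' := by
      have : q'+3-3 = q' := by omega
      rw [this]
      exact Nat.mul_le_mul_right _ h1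
    have h3 : (2*d'+1)*q' + 1 ≤ 2*(d'+2-1)*(q'+3-2) := by
      have e1 : d'+2-1 = d'+1 := by omega
      have e2 : q'+3-2 = q'+1 := by omega
      rw [e1, e2]
      nlinarith
    omega
  · intro i hadj
    obtain ⟨t, ht⟩ := hEsurj i ((hmemS i).2 hadj)
    subst ht
    exact ⟨hEle (by simp [Fin.le_def]), hEle (by simp [Fin.le_def]; have := t.isLt; omega)⟩
  · exact (hmemS _).1 (hEmem _)
  · exact (hmemS _).1 (hEmem _)


/-- Let `d ≥ 1` and `q ≥ 3` be integers, `G` a connected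
`K_{1,d}`-free graph with no induced cycle of length at least `q`, `P` an induced
path in `G`, and `v ∈ V(G) \ V(P)`. Then there is a (possibly empty) subpath `P_v`
of `P` with at most `2(d−1)(q−2)` vertices containing all neighbors of `v` on `P`,
each of whose endpoints is adjacent to `v`. -/
theorem exists_short_subpath_containing_neighbors
    (d q : ℕ) (hd : 1 ≤ d) (hq : 3 ≤ q) {V : Type} [Fintype V]
    (G : SimpleGraph V) (hconn : G.Connected) (hfree : Free (star d) G)
    (hcyc : ∀ m : ℕ, q ≤ m → IsEmpty (SimpleGraph.cycleGraph m ↪g G))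
    {n : ℕ} (f : SimpleGraph.pathGraph n ↪g G) (v : V) (hv : v ∉ Set.range ⇑f) :
    (∀ i : Fin n, ¬ G.Adj v (f i)) ∨
    ∃ a b : Fin n, a ≤ b ∧ (b : ℕ) - (a : ℕ) + 1 ≤ 2 * (d - 1) * (q - 2) ∧
      (∀ i : Fin n, G.Adj v (f i) → a ≤ i ∧ i ≤ b) ∧
      G.Adj v (f a) ∧ G.Adj v (f b) := by
  exact main_aux d q hd hq G hconn hfree hcyc f v hv

end PaperTIN
end

section
/- Let d ≥ 2 and q ≥ 3 be integers, let G be a connected K_{1,d}-free graph with no induced cycle of length at least q, let h ≥ q−1 be an integer, let P be an induced path on at least h vertices in G, and let (B, β) be the h-backbone structure of P in G. Then (B, β) is a path decomposition of G[N[V(P)]] with independence number at most (d−1)h. -/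
/-
Common definitions: tree decompositions, tree-independence number, treewidth,
independence/clique numbers, induced-subgraph freeness, and the special graphs
appearing in the paper "Treewidth versus clique number: induced minors,
distance to block graphs ... (tree-independence number)".
-/

namespace PaperTIN

open SimpleGraph

variable {V W : Type}

open SimpleGraph
section Aux
variable {V : Type} {G : SimpleGraph V}

lemma aux_fin_sub_val_one {N : ℕ} (hN : 3 ≤ N) (u v : Fin N) :
    ((u - v : Fin N) : ℕ) = 1 ↔ ((v : ℕ) + 1 = u ∨ ((v : ℕ) + 1 = N ∧ (u : ℕ) = 0)) := by
  have : NeZero N := ⟨by omega⟩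
  have h1 : ((u - v : Fin N) : ℕ) = 1 ↔ u - v = 1 := by
    rw [Fin.ext_iff, Fin.val_one', Nat.mod_eq_of_lt (by omega)]
  rw [h1, sub_eq_iff_eq_add, Fin.ext_iff, Fin.val_add, Fin.val_one',
    Nat.mod_eq_of_lt (show 1 < N by omega)]
  have hv := v.isLt
  have hu := u.isLt
  rcases Nat.lt_or_ge (1 + v.val) N with hlt | hge
  · rw [Nat.mod_eq_of_lt hlt]; omega
  · have he : 1 + v.val = N := by omega
    rw [he, Nat.mod_self]; omega

lemma aux_cycle_embed {N : ℕ} (hN : 3 ≤ N) (c : Fin N → V)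
    (hinj : Function.Injective c)
    (hadj : ∀ i j : Fin N, G.Adj (c i) (c j) ↔
      ((i : ℕ) + 1 = j ∨ (j : ℕ) + 1 = i ∨ ((i : ℕ) = 0 ∧ (j : ℕ) + 1 = N) ∨
        ((j : ℕ) = 0 ∧ (i : ℕ) + 1 = N))) :
    Nonempty (SimpleGraph.cycleGraph N ↪g G) := by
  refine ⟨⟨⟨c, hinj⟩, ?_⟩⟩
  intro i j
  rw [Function.Embedding.coeFn_mk, SimpleGraph.cycleGraph_adj', hadj,
    aux_fin_sub_val_one hN, aux_fin_sub_val_one hN]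
  omega

def auxfv {ℓ : ℕ} (f : SimpleGraph.pathGraph ℓ ↪g G) (hpos : 0 < ℓ) (m : ℕ) : V :=
  f ⟨m % ℓ, Nat.mod_lt m hpos⟩

lemma auxfv_eq {ℓ : ℕ} (f : SimpleGraph.pathGraph ℓ ↪g G) (hpos : 0 < ℓ) {m : ℕ}
    (hm : m < ℓ) : auxfv f hpos m = f ⟨m, hm⟩ := by
  unfold auxfv; congr 1; exact Fin.ext (Nat.mod_eq_of_lt hm)

lemma auxfv_coe {ℓ : ℕ} (f : SimpleGraph.pathGraph ℓ ↪g G) (hpos : 0 < ℓ) (j : Fin ℓ) :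
    auxfv f hpos (j : ℕ) = f j := by
  rw [auxfv_eq f hpos j.isLt]

lemma auxfv_inj {ℓ : ℕ} (f : SimpleGraph.pathGraph ℓ ↪g G) (hpos : 0 < ℓ) {a b : ℕ}
    (ha : a < ℓ) (hb : b < ℓ) (hab : auxfv f hpos a = auxfv f hpos b) : a = b := by
  have := f.injective hab
  simpa [auxfv, Fin.ext_iff, Nat.mod_eq_of_lt ha, Nat.mod_eq_of_lt hb] using this

lemma auxfv_adj {ℓ : ℕ} (f : SimpleGraph.pathGraph ℓ ↪g G) (hpos : 0 < ℓ) {a b : ℕ}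
    (ha : a < ℓ) (hb : b < ℓ) :
    G.Adj (auxfv f hpos a) (auxfv f hpos b) ↔ a + 1 = b ∨ b + 1 = a := by
  unfold auxfv
  rw [f.map_rel_iff, SimpleGraph.pathGraph_adj]
  simp [Nat.mod_eq_of_lt ha, Nat.mod_eq_of_lt hb]
end Aux
section Aux2
variable {V : Type} {G : SimpleGraph V}

lemma aux_cyc1 {ℓ q : ℕ} (f : SimpleGraph.pathGraph ℓ ↪g G) (hpos : 0 < ℓ)
    (hcyc : ∀ m : ℕ, q ≤ m → IsEmpty (SimpleGraph.cycleGraph m ↪g G))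
    {a b : ℕ} (hab : a + 2 ≤ b) (hb : b < ℓ) (hq : q ≤ b - a + 2) {w : V}
    (hne : ∀ m, a ≤ m → m ≤ b → w ≠ auxfv f hpos m)
    (hwa : G.Adj (auxfv f hpos a) w) (hwb : G.Adj (auxfv f hpos b) w)
    (hmid : ∀ m, a < m → m < b → ¬ G.Adj (auxfv f hpos m) w) : False := by
  set N := b - a + 2 with hNdef
  set c : Fin N → V := fun i => if (i : ℕ) ≤ b - a then auxfv f hpos (a + i) else w with hc
  have hseg : ∀ i : Fin N, (i : ℕ) ≤ b - a → c i = auxfv f hpos (a + i) := by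
    intro i hi; simp [hc, hi]
  have hw : ∀ i : Fin N, ¬ (i : ℕ) ≤ b - a → c i = w := by
    intro i hi; simp [hc, hi]
  have hltl : ∀ i : Fin N, (i : ℕ) ≤ b - a → a + (i : ℕ) < ℓ := by
    intro i hi; omega
  have hinj : Function.Injective c := by
    intro i j hij
    have hi' := i.isLt; have hj' := j.isLt
    by_cases hi : (i : ℕ) ≤ b - a <;> by_cases hj : (j : ℕ) ≤ b - a
    · rw [hseg i hi, hseg j hj] at hij
      have := auxfv_inj f hpos (hltl i hi) (hltl j hj) hij
      exact Fin.ext (by omega)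
    · rw [hseg i hi, hw j hj] at hij
      exact absurd hij.symm (hne (a + i) (by omega) (by omega))
    · rw [hw i hi, hseg j hj] at hij
      exact absurd hij (hne (a + j) (by omega) (by omega))
    · exact Fin.ext (by omega)
  have hadj : ∀ i j : Fin N, G.Adj (c i) (c j) ↔
      ((i : ℕ) + 1 = j ∨ (j : ℕ) + 1 = i ∨ ((i : ℕ) = 0 ∧ (j : ℕ) + 1 = N) ∨
        ((j : ℕ) = 0 ∧ (i : ℕ) + 1 = N)) := by
    intro i j
    have hi' := i.isLt; have hj' := j.isLt
    by_cases hi : (i : ℕ) ≤ b - a <;> by_cases hj : (j : ℕ) ≤ b - a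
    · rw [hseg i hi, hseg j hj, auxfv_adj f hpos (hltl i hi) (hltl j hj)]
      omega
    · rw [hseg i hi, hw j hj]
      have hj1 : (j : ℕ) = b - a + 1 := by omega
      constructor
      · intro had
        rcases Nat.eq_zero_or_pos (i : ℕ) with h0 | h0
        · right; right; left; omega
        rcases Nat.lt_or_ge (i : ℕ) (b - a) with hlt2 | hge2
        · exact absurd had (hmid (a + i) (by omega) (by omega))
        · left; omega
      · rintro (h1 | h2 | h3 | h4)
        · have he : a + (i : ℕ) = b := by omega
          rw [he]; exact hwb
        · omega
        · have he : a + (i : ℕ) = a := by omega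
          rw [he]; exact hwa
        · omega
    · rw [hw i hi, hseg j hj, G.adj_comm]
      have hi1 : (i : ℕ) = b - a + 1 := by omega
      constructor
      · intro had
        rcases Nat.eq_zero_or_pos (j : ℕ) with h0 | h0
        · right; right; right; omega
        rcases Nat.lt_or_ge (j : ℕ) (b - a) with hlt2 | hge2
        · exact absurd had (hmid (a + j) (by omega) (by omega))
        · right; left; omega
      · rintro (h1 | h2 | h3 | h4)
        · omega
        · have he : a + (j : ℕ) = b := by omega
          rw [he]; exact hwb
        · omega
        · have he : a + (j : ℕ) = a := by omega
          rw [he]; exact hwa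
    · rw [hw i hi, hw j hj]
      exact iff_of_false (G.irrefl) (by omega)
  exact (hcyc N (by omega)).false (aux_cycle_embed (by omega) c hinj hadj).some

lemma aux_cyc2 {ℓ q : ℕ} (f : SimpleGraph.pathGraph ℓ ↪g G) (hpos : 0 < ℓ)
    (hcyc : ∀ m : ℕ, q ≤ m → IsEmpty (SimpleGraph.cycleGraph m ↪g G))
    {a b : ℕ} (hab : a ≤ b) (hb : b < ℓ) (hq : q ≤ b - a + 3) {X Y : V}
    (hXY : G.Adj X Y)
    (hbX : G.Adj (auxfv f hpos b) X) (haY : G.Adj (auxfv f hpos a) Y)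
    (hXne : ∀ m, a ≤ m → m ≤ b → X ≠ auxfv f hpos m)
    (hYne : ∀ m, a ≤ m → m ≤ b → Y ≠ auxfv f hpos m)
    (hXmid : ∀ m, a ≤ m → m < b → ¬ G.Adj (auxfv f hpos m) X)
    (hYmid : ∀ m, a < m → m ≤ b → ¬ G.Adj (auxfv f hpos m) Y) : False := by
  set N := b - a + 3 with hNdef
  set c : Fin N → V := fun i =>
    if (i : ℕ) ≤ b - a then auxfv f hpos (a + i) else if (i : ℕ) = b - a + 1 then X else Y
    with hc
  have hseg : ∀ i : Fin N, (i : ℕ) ≤ b - a → c i = auxfv f hpos (a + i) := by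
    intro i hi; simp [hc, hi]
  have hX : ∀ i : Fin N, (i : ℕ) = b - a + 1 → c i = X := by
    intro i hi; simp [hc, hi]
  have hY : ∀ i : Fin N, (i : ℕ) = b - a + 2 → c i = Y := by
    intro i hi; simp [hc, hi]
  have hltl : ∀ i : Fin N, (i : ℕ) ≤ b - a → a + (i : ℕ) < ℓ := by
    intro i hi; omega
  have htri : ∀ i : Fin N, (i : ℕ) ≤ b - a ∨ (i : ℕ) = b - a + 1 ∨ (i : ℕ) = b - a + 2 := by
    intro i; have := i.isLt; omega
  have hinj : Function.Injective c := by
    intro i j hij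
    rcases htri i with hi | hi | hi <;> rcases htri j with hj | hj | hj
    · rw [hseg i hi, hseg j hj] at hij
      have := auxfv_inj f hpos (hltl i hi) (hltl j hj) hij
      exact Fin.ext (by omega)
    · rw [hseg i hi, hX j hj] at hij
      exact absurd hij.symm (hXne (a + i) (by omega) (by omega))
    · rw [hseg i hi, hY j hj] at hij
      exact absurd hij.symm (hYne (a + i) (by omega) (by omega))
    · rw [hX i hi, hseg j hj] at hij
      exact absurd hij (hXne (a + j) (by omega) (by omega))
    · exact Fin.ext (by omega)
    · rw [hX i hi, hY j hj] at hij
      exact absurd hij hXY.ne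
    · rw [hY i hi, hseg j hj] at hij
      exact absurd hij (hYne (a + j) (by omega) (by omega))
    · rw [hY i hi, hX j hj] at hij
      exact absurd hij.symm hXY.ne
    · exact Fin.ext (by omega)
  have hadj : ∀ i j : Fin N, G.Adj (c i) (c j) ↔
      ((i : ℕ) + 1 = j ∨ (j : ℕ) + 1 = i ∨ ((i : ℕ) = 0 ∧ (j : ℕ) + 1 = N) ∨
        ((j : ℕ) = 0 ∧ (i : ℕ) + 1 = N)) := by
    intro i j
    have hi' := i.isLt; have hj' := j.isLt
    rcases htri i with hi | hi | hi <;> rcases htri j with hj | hj | hj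
    · rw [hseg i hi, hseg j hj, auxfv_adj f hpos (hltl i hi) (hltl j hj)]
      omega
    · -- seg, X
      rw [hseg i hi, hX j hj]
      constructor
      · intro had
        rcases Nat.lt_or_ge (i : ℕ) (b - a) with hlt2 | hge2
        · exact absurd had (hXmid (a + i) (by omega) (by omega))
        · left; omega
      · rintro (h1 | h2 | h3 | h4)
        · have he : a + (i : ℕ) = b := by omega
          rw [he]; exact hbX
        · omega
        · omega
        · omega
    · -- seg, Y
      rw [hseg i hi, hY j hj]
      constructor
      · intro had
        rcases Nat.eq_zero_or_pos (i : ℕ) with h0 | h0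
        · right; right; left; omega
        · exact absurd had (hYmid (a + i) (by omega) (by omega))
      · rintro (h1 | h2 | h3 | h4)
        · omega
        · omega
        · have he : a + (i : ℕ) = a := by omega
          rw [he]; exact haY
        · omega
    · -- X, seg
      rw [hX i hi, hseg j hj, G.adj_comm]
      constructor
      · intro had
        rcases Nat.lt_or_ge (j : ℕ) (b - a) with hlt2 | hge2
        · exact absurd had (hXmid (a + j) (by omega) (by omega))
        · right; left; omega
      · rintro (h1 | h2 | h3 | h4)
        · omega
        · have he : a + (j : ℕ) = b := by omega
          rw [he]; exact hbX
        · omega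
        · omega
    · rw [hX i hi, hX j hj]
      exact iff_of_false (G.irrefl) (by omega)
    · rw [hX i hi, hY j hj]
      exact iff_of_true hXY (by omega)
    · -- Y, seg
      rw [hY i hi, hseg j hj, G.adj_comm]
      constructor
      · intro had
        rcases Nat.eq_zero_or_pos (j : ℕ) with h0 | h0
        · right; right; right; omega
        · exact absurd had (hYmid (a + j) (by omega) (by omega))
      · rintro (h1 | h2 | h3 | h4)
        · omega
        · omega
        · omega
        · have he : a + (j : ℕ) = a := by omega
          rw [he]; exact haY
    · rw [hY i hi, hX j hj]
      exact iff_of_true hXY.symm (by omega)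
    · rw [hY i hi, hY j hj]
      exact iff_of_false (G.irrefl) (by omega)
  exact (hcyc N (by omega)).false (aux_cycle_embed (by omega) c hinj hadj).some

lemma aux_mem_backboneBag_iff {ℓ : ℕ} (f : SimpleGraph.pathGraph ℓ ↪g G) (h i : ℕ) (v : V) :
    v ∈ backboneBag G f h i ↔
      ∃ j : Fin ℓ, i ≤ (j : ℕ) ∧ (j : ℕ) ≤ i + h - 1 ∧ (f j = v ∨ G.Adj (f j) v) := by
  simp only [backboneBag, closedNbhdSet, nbhdSet, Set.mem_union,
    Set.mem_image, Set.mem_setOf_eq]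
  constructor
  · rintro (⟨j, ⟨h1, h2⟩, rfl⟩ | ⟨x, ⟨j, ⟨h1, h2⟩, rfl⟩, hadj⟩)
    · exact ⟨j, h1, h2, Or.inl rfl⟩
    · exact ⟨j, h1, h2, Or.inr hadj⟩
  · rintro ⟨j, h1, h2, (rfl | hadj)⟩
    · exact Or.inl ⟨j, ⟨h1, h2⟩, rfl⟩
    · exact Or.inr ⟨f j, ⟨j, ⟨h1, h2⟩, rfl⟩, hadj⟩

lemma aux_mem_closedNbhd_range_iff {ℓ : ℕ} (f : SimpleGraph.pathGraph ℓ ↪g G) (v : V) :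
    v ∈ closedNbhdSet G (Set.range ⇑f) ↔ ∃ j : Fin ℓ, f j = v ∨ G.Adj (f j) v := by
  simp only [closedNbhdSet, nbhdSet, Set.mem_union, Set.mem_setOf_eq,
    Set.mem_range]
  constructor
  · rintro (⟨j, rfl⟩ | ⟨x, ⟨j, rfl⟩, hadj⟩)
    · exact ⟨j, Or.inl rfl⟩
    · exact ⟨j, Or.inr hadj⟩
  · rintro ⟨j, (rfl | hadj)⟩
    · exact Or.inl ⟨j, rfl⟩
    · exact Or.inr ⟨f j, ⟨j, rfl⟩, hadj⟩

lemma aux_core3 {ℓ q h : ℕ} (hq3 : 3 ≤ q) (hh : q - 1 ≤ h)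
    (f : SimpleGraph.pathGraph ℓ ↪g G) (hpos : 0 < ℓ)
    (hcyc : ∀ m : ℕ, q ≤ m → IsEmpty (SimpleGraph.cycleGraph m ↪g G))
    {u v : V} (huv : G.Adj u v) {j k : Fin ℓ} (hjk : (j : ℕ) ≤ k) (hgap : h ≤ (k : ℕ) - j)
    (hu : f j = u ∨ G.Adj (f j) u) (hv : f k = v ∨ G.Adj (f k) v)
    (hmin : ∀ j' k' : Fin ℓ, (f j' = u ∨ G.Adj (f j') u) → (f k' = v ∨ G.Adj (f k') v) →
      (k : ℕ) - j ≤ max (j' : ℕ) (k' : ℕ) - min (j' : ℕ) (k' : ℕ)) : False := by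
  have hkl := k.isLt
  have hjl := j.isLt
  have hgap2 : 2 ≤ (k : ℕ) - j := by omega
  have hu' : G.Adj (f j) u := by
    rcases hu with hfj | hadj
    · exfalso
      have hadjv : G.Adj (f j) v := hfj ▸ huv
      have := hmin j j (Or.inl hfj) (Or.inr hadjv)
      omega
    · exact hadj
  have hv' : G.Adj (f k) v := by
    rcases hv with hfk | hadj
    · exfalso
      have hadju : G.Adj (f k) u := hfk ▸ huv.symm
      have := hmin k k (Or.inr hadju) (Or.inl hfk)
      omega
    · exact hadj
  -- apply aux_cyc2 with a = j, b = k, X = v, Y = u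
  refine aux_cyc2 f hpos hcyc (a := (j : ℕ)) (b := (k : ℕ)) hjk hkl (by omega)
    huv.symm ?_ ?_ ?_ ?_ ?_ ?_
  · rw [auxfv_coe]; exact hv'
  · rw [auxfv_coe]; exact hu'
  · -- v ≠ f m for j ≤ m ≤ k
    intro m hm1 hm2 hvm
    have hml : m < ℓ := by omega
    rw [auxfv_eq f hpos hml] at hvm
    rcases Nat.lt_or_ge m (k : ℕ) with hmk | hmk
    · have hval : ((⟨m, hml⟩ : Fin ℓ) : ℕ) = m := rfl
      have := hmin j ⟨m, hml⟩ hu (Or.inl hvm.symm)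
      rw [hval] at this
      rw [Nat.max_eq_right hm1, Nat.min_eq_left hm1] at this
      omega
    · have hek : (⟨m, hml⟩ : Fin ℓ) = k := Fin.ext (show m = (k : ℕ) by omega)
      rw [hek] at hvm
      rw [hvm] at hv'
      exact G.irrefl hv'
  · -- u ≠ f m for j ≤ m ≤ k
    intro m hm1 hm2 hum
    have hml : m < ℓ := by omega
    rw [auxfv_eq f hpos hml] at hum
    rcases Nat.lt_or_ge (j : ℕ) m with hmj | hmj
    · have hval : ((⟨m, hml⟩ : Fin ℓ) : ℕ) = m := rfl
      have := hmin ⟨m, hml⟩ k (Or.inl hum.symm) hv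
      rw [hval] at this
      rw [Nat.max_eq_right hm2, Nat.min_eq_left hm2] at this
      omega
    · have hej : (⟨m, hml⟩ : Fin ℓ) = j := Fin.ext (show m = (j : ℕ) by omega)
      rw [hej] at hum
      rw [hum] at hu'
      exact G.irrefl hu'
  · -- ¬ Adj (f m) v for j ≤ m < k
    intro m hm1 hm2 hadm
    have hml : m < ℓ := by omega
    rw [auxfv_eq f hpos hml] at hadm
    have := hmin j ⟨m, hml⟩ hu (Or.inr hadm)
    simp only [Fin.val_mk] at this
    omega
  · -- ¬ Adj (f m) u for j < m ≤ k
    intro m hm1 hm2 hadm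
    have hml : m < ℓ := by omega
    rw [auxfv_eq f hpos hml] at hadm
    have := hmin ⟨m, hml⟩ k (Or.inr hadm) hv
    simp only [Fin.val_mk] at this
    omega
end Aux2


/-- Let `d ≥ 2` and `q ≥ 3` be integers, `G` a connected
`K_{1,d}`-free graph with no induced cycle of length at least `q`, `h ≥ q−1` an
integer, and `P = v_0 … v_{ℓ-1}` an induced path on `ℓ ≥ h` vertices in `G`. Then
the `h`-backbone structure `(B, β)` of `P` in `G` (with bags `β(b_i) = N[{v_i, …,
v_{i+h-1}}]` for `0 ≤ i ≤ ℓ−h`) is a path decomposition of `G[N[V(P)]]` whose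
independence number is at most `(d−1)h`. -/
theorem backbone_is_path_decomposition
    (d q h : ℕ) (hd : 2 ≤ d) (hq : 3 ≤ q) (hh : q - 1 ≤ h)
    {V : Type} [Fintype V] (G : SimpleGraph V) (hconn : G.Connected)
    (hfree : Free (star d) G)
    (hcyc : ∀ m : ℕ, q ≤ m → IsEmpty (SimpleGraph.cycleGraph m ↪g G))
    {ℓ : ℕ} (hℓ : h ≤ ℓ) (f : SimpleGraph.pathGraph ℓ ↪g G) :
    (∀ i ≤ ℓ - h, backboneBag G f h i ⊆ closedNbhdSet G (Set.range ⇑f)) ∧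
    (∀ v ∈ closedNbhdSet G (Set.range ⇑f), ∃ i ≤ ℓ - h, v ∈ backboneBag G f h i) ∧
    (∀ u v : V, u ∈ closedNbhdSet G (Set.range ⇑f) →
      v ∈ closedNbhdSet G (Set.range ⇑f) → G.Adj u v →
      ∃ i ≤ ℓ - h, u ∈ backboneBag G f h i ∧ v ∈ backboneBag G f h i) ∧
    (∀ v : V, ∀ i j k : ℕ, i ≤ j → j ≤ k → k ≤ ℓ - h →
      v ∈ backboneBag G f h i → v ∈ backboneBag G f h k → v ∈ backboneBag G f h j) ∧
    (∀ i ≤ ℓ - h, indepNumOn G (backboneBag G f h i) ≤ (d - 1) * h) := by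
  classical
  have h2 : 2 ≤ h := by omega
  have hpos : 0 < ℓ := by omega
  refine ⟨?_, ?_, ?_, ?_, ?_⟩
  · -- (1) bags are contained in N[V(P)]
    intro i _ x hx
    rw [aux_mem_backboneBag_iff] at hx
    obtain ⟨jj, _, _, hx⟩ := hx
    rw [aux_mem_closedNbhd_range_iff]
    exact ⟨jj, hx⟩
  · -- (2) every vertex of N[V(P)] is in some bag
    intro v hv
    rw [aux_mem_closedNbhd_range_iff] at hv
    obtain ⟨jj, hjj⟩ := hv
    have hjl := jj.isLt
    refine ⟨min (jj : ℕ) (ℓ - h), by omega, ?_⟩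
    rw [aux_mem_backboneBag_iff]
    exact ⟨jj, by omega, by omega, hjj⟩
  · -- (3) every edge is in some bag
    intro u v hu hv huv
    rw [aux_mem_closedNbhd_range_iff] at hu hv
    obtain ⟨j0, hj0⟩ := hu
    obtain ⟨k0, hk0⟩ := hv
    have hex : ∃ n, ∃ j' : Fin ℓ, ∃ k' : Fin ℓ,
        (f j' = u ∨ G.Adj (f j') u) ∧ (f k' = v ∨ G.Adj (f k') v) ∧
        max (j' : ℕ) (k' : ℕ) - min (j' : ℕ) (k' : ℕ) = n :=
      ⟨_, j0, k0, hj0, hk0, rfl⟩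
    obtain ⟨j, k, hju, hkv, hn⟩ := Nat.find_spec hex
    have hmin : ∀ j' k' : Fin ℓ, (f j' = u ∨ G.Adj (f j') u) → (f k' = v ∨ G.Adj (f k') v) →
        Nat.find hex ≤ max (j' : ℕ) (k' : ℕ) - min (j' : ℕ) (k' : ℕ) := by
      intro j' k' h1' h2'
      by_contra hcon
      push_neg at hcon
      exact Nat.find_min hex hcon ⟨j', k', h1', h2', rfl⟩
    have hjl := j.isLt
    have hkl := k.isLt
    have hsmall : max (j : ℕ) (k : ℕ) - min (j : ℕ) (k : ℕ) ≤ h - 1 := by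
      by_contra hcon
      rcases Nat.le_total (j : ℕ) (k : ℕ) with hjk | hkj
      · refine aux_core3 hq hh f hpos hcyc huv hjk (by omega) hju hkv ?_
        intro j' k' h1' h2'
        have := hmin j' k' h1' h2'
        omega
      · refine aux_core3 hq hh f hpos hcyc huv.symm hkj (by omega) hkv hju ?_
        intro j' k' h1' h2'
        have := hmin k' j' h2' h1'
        omega
    refine ⟨min (min (j : ℕ) (k : ℕ)) (ℓ - h), by omega, ?_, ?_⟩
    · rw [aux_mem_backboneBag_iff]
      exact ⟨j, by omega, by omega, hju⟩
    · rw [aux_mem_backboneBag_iff]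
      exact ⟨k, by omega, by omega, hkv⟩
  · -- (4) the bags containing a fixed vertex form an interval
    intro v i j k hij hjk hk hvi hvk
    rw [aux_mem_backboneBag_iff] at hvi hvk
    obtain ⟨a, hai, hai', ha⟩ := hvi
    obtain ⟨b, hbk, hbk', hb⟩ := hvk
    rw [aux_mem_backboneBag_iff]
    by_contra hcon
    push_neg at hcon
    have hcon' : ∀ c : Fin ℓ, j ≤ (c : ℕ) → (c : ℕ) ≤ j + h - 1 →
        ¬ (f c = v ∨ G.Adj (f c) v) := by
      intro c h1' h2' hP
      rcases hP with he | hadj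
      · exact (hcon c h1' h2').1 he
      · exact (hcon c h1' h2').2 hadj
    exfalso
    have hal := a.isLt
    have hbl := b.isLt
    have haj : (a : ℕ) < j := by
      rcases Nat.lt_or_ge (a : ℕ) j with h' | h'
      · exact h'
      · exact absurd ha (hcon' a h' (by omega))
    have hbj : j + h ≤ (b : ℕ) := by
      rcases Nat.lt_or_ge (b : ℕ) (j + h) with h' | h'
      · exact absurd hb (hcon' b (by omega) (by omega))
      · exact h'
    have hPaa : (a : ℕ) < j ∧ ∃ hm : (a : ℕ) < ℓ,
        (f ⟨(a : ℕ), hm⟩ = v ∨ G.Adj (f ⟨(a : ℕ), hm⟩) v) := by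
      refine ⟨haj, a.isLt, ?_⟩
      have he : (⟨(a : ℕ), a.isLt⟩ : Fin ℓ) = a := Fin.ext rfl
      rw [he]
      exact ha
    set Pa : ℕ → Prop := fun m => m < j ∧ ∃ hm : m < ℓ,
      (f ⟨m, hm⟩ = v ∨ G.Adj (f ⟨m, hm⟩) v) with hPadef
    set a' := Nat.findGreatest Pa (j - 1) with ha'def
    have hPa' : Pa a' := Nat.findGreatest_spec (m := (a : ℕ)) (by omega) hPaa
    have ha'le : a' ≤ j - 1 := Nat.findGreatest_le (j - 1)
    have ha'max : ∀ m, a' < m → m ≤ j - 1 → ¬ Pa m := by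
      intro m h1' h2'
      exact Nat.findGreatest_is_greatest h1' h2'
    obtain ⟨ha'j, ha'l, ha'v⟩ := hPa'
    have hQex : ∃ m, j + h ≤ m ∧ ∃ hm : m < ℓ,
        (f ⟨m, hm⟩ = v ∨ G.Adj (f ⟨m, hm⟩) v) := by
      refine ⟨(b : ℕ), hbj, b.isLt, ?_⟩
      have he : (⟨(b : ℕ), b.isLt⟩ : Fin ℓ) = b := Fin.ext rfl
      rw [he]
      exact hb
    obtain ⟨hb'j, hb'l, hb'v⟩ := Nat.find_spec hQex
    have hb'min : ∀ m, m < Nat.find hQex → ¬ (j + h ≤ m ∧ ∃ hm : m < ℓ,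
        (f ⟨m, hm⟩ = v ∨ G.Adj (f ⟨m, hm⟩) v)) := by
      intro m hm
      exact Nat.find_min hQex hm
    set b' := Nat.find hQex with hb'def
    have hgap : a' + 2 ≤ b' := by omega
    have hadja' : G.Adj (f ⟨a', ha'l⟩) v := by
      rcases ha'v with he | hadj
      · exfalso
        rcases hb'v with he2 | hadj2
        · have heq : (⟨a', ha'l⟩ : Fin ℓ) = ⟨b', hb'l⟩ := f.injective (he.trans he2.symm)
          have hval := congrArg Fin.val heq
          have e1 : Fin.val (⟨a', ha'l⟩ : Fin ℓ) = a' := rfl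
          have e2 : Fin.val (⟨b', hb'l⟩ : Fin ℓ) = b' := rfl
          omega
        · have hadj3 : G.Adj (f ⟨b', hb'l⟩) (f ⟨a', ha'l⟩) := by
            rw [he]; exact hadj2
          have hpa := SimpleGraph.pathGraph_adj.mp (f.map_rel_iff.mp hadj3)
          have e1 : ((⟨a', ha'l⟩ : Fin ℓ) : ℕ) = a' := rfl
          have e2 : ((⟨b', hb'l⟩ : Fin ℓ) : ℕ) = b' := rfl
          omega
      · exact hadj
    have hadjb' : G.Adj (f ⟨b', hb'l⟩) v := by
      rcases hb'v with he | hadj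
      · exfalso
        have hadj3 : G.Adj (f ⟨a', ha'l⟩) (f ⟨b', hb'l⟩) := by
          rw [he]; exact hadja'
        have hpa := SimpleGraph.pathGraph_adj.mp (f.map_rel_iff.mp hadj3)
        have e1 : ((⟨a', ha'l⟩ : Fin ℓ) : ℕ) = a' := rfl
        have e2 : ((⟨b', hb'l⟩ : Fin ℓ) : ℕ) = b' := rfl
        omega
      · exact hadj
    have hnov : ∀ m (hm : m < ℓ), a' < m → m < b' →
        ¬ (f ⟨m, hm⟩ = v ∨ G.Adj (f ⟨m, hm⟩) v) := by
      intro m hm h1' h2' hP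
      rcases Nat.lt_or_ge m j with hmj | hmj
      · exact ha'max m h1' (by omega) ⟨hmj, hm, hP⟩
      rcases Nat.lt_or_ge m (j + h) with hmw | hmw
      · have he : ((⟨m, hm⟩ : Fin ℓ) : ℕ) = m := rfl
        exact hcon' ⟨m, hm⟩ (by omega) (by omega) hP
      · exact hb'min m h2' ⟨hmw, hm, hP⟩
    refine aux_cyc1 f hpos hcyc (a := a') (b := b') (w := v) hgap hb'l (by omega) ?_ ?_ ?_ ?_
    · intro m h1' h2'
      have hml : m < ℓ := by omega
      rw [auxfv_eq f hpos hml]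
      intro hvm
      rcases Nat.lt_or_ge a' m with h3 | h3
      · rcases Nat.lt_or_ge m b' with h4 | h4
        · exact hnov m hml h3 h4 (Or.inl hvm.symm)
        · have heq : (⟨m, hml⟩ : Fin ℓ) = ⟨b', hb'l⟩ := Fin.ext (show m = b' by omega)
          rw [heq] at hvm
          rw [hvm] at hadjb'
          exact G.irrefl hadjb'
      · have heq : (⟨m, hml⟩ : Fin ℓ) = ⟨a', ha'l⟩ := Fin.ext (show m = a' by omega)
        rw [heq] at hvm
        rw [hvm] at hadja'
        exact G.irrefl hadja'
    · rw [auxfv_eq f hpos ha'l]; exact hadja'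
    · rw [auxfv_eq f hpos hb'l]; exact hadjb'
    · intro m h1' h2' hadm
      have hml : m < ℓ := by omega
      rw [auxfv_eq f hpos hml] at hadm
      exact hnov m hml h1' h2' (Or.inr hadm)
  · -- (5) independence number of each bag
    intro i _
    unfold indepNumOn
    apply csSup_le'
    rintro n ⟨t, hts, hind, rfl⟩
    have hch : ∀ s ∈ t, ∃ jj : Fin ℓ, i ≤ (jj : ℕ) ∧ (jj : ℕ) ≤ i + h - 1 ∧
        (f jj = s ∨ G.Adj (f jj) s) := by
      intro s hs
      have := hts hs
      rwa [aux_mem_backboneBag_iff] at this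
    set g : V → Fin ℓ := fun s =>
      if hs : ∃ jj : Fin ℓ, i ≤ (jj : ℕ) ∧ (jj : ℕ) ≤ i + h - 1 ∧
          (f jj = s ∨ G.Adj (f jj) s) then hs.choose else ⟨0, hpos⟩ with hg
    have hgspec : ∀ s ∈ t, i ≤ ((g s) : ℕ) ∧ ((g s) : ℕ) ≤ i + h - 1 ∧
        (f (g s) = s ∨ G.Adj (f (g s)) s) := by
      intro s hs
      have hexs := hch s hs
      rw [hg]
      simp only [dif_pos hexs]
      exact hexs.choose_spec
    set W : Finset (Fin ℓ) :=
      Finset.univ.filter (fun jj => i ≤ (jj : ℕ) ∧ (jj : ℕ) ≤ i + h - 1) with hW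
    have hmaps : ∀ s ∈ t, g s ∈ W := by
      intro s hs
      obtain ⟨h1', h2', _⟩ := hgspec s hs
      simp [hW, h1', h2']
    have hWcard : W.card ≤ h := by
      have himg : W.image (fun jj : Fin ℓ => (jj : ℕ)) ⊆ Finset.Icc i (i + h - 1) := by
        intro x hx
        simp only [Finset.mem_image] at hx
        obtain ⟨y, hy, rfl⟩ := hx
        simp only [hW, Finset.mem_filter, Finset.mem_univ, true_and] at hy
        simp only [Finset.mem_Icc]
        exact hy
      have hle := Finset.card_le_card himg
      rw [Finset.card_image_of_injective _ (fun x y hxy => Fin.ext hxy)] at hle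
      rw [Nat.card_Icc] at hle
      omega
    have hfiber : ∀ jj ∈ W, (t.filter (fun s => g s = jj)).card ≤ d - 1 := by
      intro jj _
      set F := t.filter (fun s => g s = jj) with hF
      have hFN : ∀ s ∈ F, f jj = s ∨ G.Adj (f jj) s := by
        intro s hs
        obtain ⟨hst, hgs⟩ := Finset.mem_filter.mp hs
        have := (hgspec s hst).2.2
        rwa [hgs] at this
      have hFt : ∀ s ∈ F, s ∈ t := fun s hs => (Finset.mem_filter.mp hs).1
      by_cases hjjF : f jj ∈ F
      · -- the path vertex itself is independent-set member: fiber is a singleton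
        have hsub : F ⊆ {f jj} := by
          intro s hs
          rcases hFN s hs with he | hadj
          · simp [← he]
          · exfalso
            exact hind (Finset.mem_coe.mpr (hFt _ hjjF)) (Finset.mem_coe.mpr (hFt _ hs))
              (G.ne_of_adj hadj) hadj
        have := Finset.card_le_card hsub
        simp at this
        omega
      · -- all fiber elements are neighbors of f jj
        have hadjF : ∀ s ∈ F, G.Adj (f jj) s := by
          intro s hs
          rcases hFN s hs with he | hadj
          · exact absurd (he ▸ hs) hjjF
          · exact hadj
        by_contra hcon
        push_neg at hcon
        have hd' : d ≤ F.card := by omega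
        obtain ⟨F', hF'sub, hF'card⟩ := Finset.exists_subset_card_eq hd'
        have e : (F' : Type) ≃ Fin d := by
          exact Fintype.equivFinOfCardEq (by rw [Fintype.card_coe, hF'card])
        have hne : Nonempty (star d ↪g G) := by
          refine ⟨⟨⟨fun x => Sum.elim (fun _ => f jj) (fun kk => ((e.symm kk : F') : V)) x,
            ?_⟩, ?_⟩⟩
          · intro x y hxy
            match x, y with
            | Sum.inl a, Sum.inl b => exact congrArg Sum.inl (Subsingleton.elim a b)
            | Sum.inl a, Sum.inr kk =>
              exact absurd hxy (G.ne_of_adj (hadjF _ (hF'sub (e.symm kk).2)))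
            | Sum.inr kk, Sum.inl a =>
              exact absurd hxy.symm (G.ne_of_adj (hadjF _ (hF'sub (e.symm kk).2)))
            | Sum.inr kk, Sum.inr kk' =>
              simp only [Sum.elim_inr] at hxy
              exact congrArg Sum.inr (e.symm.injective (Subtype.ext hxy))
          · intro x y
            match x, y with
            | Sum.inl a, Sum.inl b =>
              exact iff_of_false G.irrefl (by simp [star, completeBipartiteGraph])
            | Sum.inl a, Sum.inr kk =>
              refine iff_of_true (hadjF _ (hF'sub (e.symm kk).2)) ?_
              simp [star]
            | Sum.inr kk, Sum.inl a =>
              refine iff_of_true (hadjF _ (hF'sub (e.symm kk).2)).symm ?_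
              simp [star]
            | Sum.inr kk, Sum.inr kk' =>
              refine iff_of_false ?_ (by simp [star])
              by_cases hkk : kk = kk'
              · subst hkk
                exact G.irrefl
              · have hne2 : ((e.symm kk : F') : V) ≠ ((e.symm kk' : F') : V) := by
                  intro hcon2
                  exact hkk (e.symm.injective (Subtype.ext hcon2))
                exact hind (Finset.mem_coe.mpr (hFt _ (hF'sub (e.symm kk).2)))
                  (Finset.mem_coe.mpr (hFt _ (hF'sub (e.symm kk').2))) hne2
        exact hfree.false hne.some
    calc t.card ≤ (d - 1) * W.card :=
          Finset.card_le_mul_card_image_of_maps_to hmaps (d - 1) hfiber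
      _ ≤ (d - 1) * h := Nat.mul_le_mul_left _ hWcard

end PaperTIN
end

section
/- Let H be a graph, let {H_j}_{j ∈ J} be a family of connected subgraphs of H, and let G be the graph with vertex set J in which two distinct vertices i and j are adjacent if and only if H_i and H_j have a vertex in common. Then tree-α(G) ≤ tw(H) + 1. -/
/-
Common definitions: tree decompositions, tree-independence number, treewidth,
independence/clique numbers, induced-subgraph freeness, and the special graphs
appearing in the paper "Treewidth versus clique number: induced minors,
distance to block graphs ... (tree-independence number)".
-/

namespace PaperTIN

open SimpleGraph

variable {V W : Type}

/-- The trivial tree decomposition with a single bag containing all vertices. -/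
noncomputable def trivialTD (H : SimpleGraph W) : TreeDecomp H where
  ι := Unit
  tree := ⊥
  isTree := by
    refine ⟨SimpleGraph.Connected.mk (fun a b => (Subsingleton.elim a b) ▸ SimpleGraph.Reachable.refl a), ?_⟩
    intro v c hc
    cases c with
    | nil => exact hc.ne_nil rfl
    | cons h _ => exact h.elim
  bag := fun _ => Set.univ
  bag_vert := fun _ => ⟨(), trivial⟩
  bag_edge := fun _ _ _ => ⟨(), trivial, trivial⟩
  bag_conn := fun v => by
    haveI : Nonempty {t : Unit | v ∈ (fun _ => (Set.univ : Set W)) t} := ⟨⟨(), trivial⟩⟩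
    exact SimpleGraph.Connected.mk
      (fun a b => (Subsingleton.elim a b) ▸ SimpleGraph.Reachable.refl a)

/-- The intersection-graph tree decomposition built from a tree decomposition of `H`. -/
noncomputable def intersectionTD {W J : Type} (H : SimpleGraph W)
    (Hj : J → H.Subgraph) (hconn : ∀ j : J, (Hj j).Connected)
    (G : SimpleGraph J)
    (hG : ∀ i j : J, G.Adj i j ↔ i ≠ j ∧ ((Hj i).verts ∩ (Hj j).verts).Nonempty)
    (D : TreeDecomp H) : TreeDecomp G where
  ι := D.ι
  tree := D.tree
  isTree := D.isTree
  bag t := {j | ∃ w ∈ (Hj j).verts, w ∈ D.bag t}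
  bag_vert j := by
    obtain ⟨w, hw⟩ := (hconn j).nonempty
    obtain ⟨t, ht⟩ := D.bag_vert w
    exact ⟨t, w, hw, ht⟩
  bag_edge i j hij := by
    obtain ⟨-, w, hwi, hwj⟩ := (hG i j).1 hij
    obtain ⟨t, ht⟩ := D.bag_vert w
    exact ⟨t, ⟨w, hwi, ht⟩, ⟨w, hwj, ht⟩⟩
  bag_conn j := by
    classical
    set S : Set D.ι := {t | ∃ w ∈ (Hj j).verts, w ∈ D.bag t} with hSdef
    have key : ∀ (A : Set D.ι) (hAS : A ⊆ S) (a b : {x // x ∈ A}),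
        (D.tree.induce A).Reachable a b →
        (D.tree.induce S).Reachable ⟨a.1, hAS a.2⟩ ⟨b.1, hAS b.2⟩ := by
      intro A hAS a b h
      let f : (D.tree.induce A) →g (D.tree.induce S) :=
        { toFun := fun x => ⟨x.1, hAS x.2⟩, map_rel' := fun hadj => hadj }
      exact h.map f
    have one : ∀ (w : W) (hw : w ∈ (Hj j).verts) (t1 t2 : D.ι)
        (h1 : w ∈ D.bag t1) (h2 : w ∈ D.bag t2),
        (D.tree.induce S).Reachable ⟨t1, ⟨w, hw, h1⟩⟩ ⟨t2, ⟨w, hw, h2⟩⟩ := by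
      intro w hw t1 t2 h1 h2
      have hAS : {t | w ∈ D.bag t} ⊆ S := fun t ht => ⟨w, hw, ht⟩
      exact key _ hAS ⟨t1, h1⟩ ⟨t2, h2⟩ ((D.bag_conn w).preconnected ⟨t1, h1⟩ ⟨t2, h2⟩)
    have main : ∀ (w1 w2 : (Hj j).verts) (p : (Hj j).coe.Walk w1 w2)
        (t1 t2 : D.ι) (h1 : (w1 : W) ∈ D.bag t1) (h2 : (w2 : W) ∈ D.bag t2),
        (D.tree.induce S).Reachable ⟨t1, ⟨w1, w1.2, h1⟩⟩ ⟨t2, ⟨w2, w2.2, h2⟩⟩ := by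
      intro w1 w2 p
      induction p with
      | nil => intro t1 t2 h1 h2; exact one _ (Subtype.coe_prop _) t1 t2 h1 h2
      | @cons a b c hadj p ih =>
        intro t1 t2 h1 h2
        have hH : H.Adj a b := (Hj j).coe_adj_sub a b hadj
        obtain ⟨t, hta, htb⟩ := D.bag_edge hH
        exact (one _ a.2 t1 t h1 hta).trans (ih t t2 htb h2)
    show (D.tree.induce S).Connected
    have hnon : Nonempty {t // t ∈ S} := by
      obtain ⟨w, hw⟩ := (hconn j).nonempty
      obtain ⟨t, ht⟩ := D.bag_vert w
      exact ⟨⟨t, w, hw, ht⟩⟩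
    haveI := hnon
    refine SimpleGraph.Connected.mk ?_
    intro a b
    obtain ⟨w1, hw1, hb1⟩ := a.2
    obtain ⟨w2, hw2, hb2⟩ := b.2
    obtain ⟨p⟩ := (hconn j).coe.preconnected ⟨w1, hw1⟩ ⟨w2, hw2⟩
    exact main ⟨w1, hw1⟩ ⟨w2, hw2⟩ p a.1 b.1 hb1 hb2

/-- Let `H` be a graph, `{H_j}_{j ∈ J}` a family of connected
subgraphs of `H`, and `G` the graph on vertex set `J` where distinct `i, j` are
adjacent iff `H_i` and `H_j` share a vertex. Then `tree-α(G) ≤ tw(H) + 1`. -/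
theorem treeIndepNum_intersectionGraph_le_treewidth_add_one
    {W J : Type} [Fintype W] [Fintype J] (H : SimpleGraph W)
    (Hj : J → H.Subgraph) (hconn : ∀ j : J, (Hj j).Connected)
    (G : SimpleGraph J)
    (hG : ∀ i j : J, G.Adj i j ↔ i ≠ j ∧ ((Hj i).verts ∩ (Hj j).verts).Nonempty) :
    treeIndepNum G ≤ treewidth H + 1 := by
  classical
  have hne : {n | ∃ D : TreeDecomp H, D.width = n}.Nonempty := ⟨_, trivialTD H, rfl⟩
  obtain ⟨D, hD⟩ : treewidth H ∈ {n | ∃ D : TreeDecomp H, D.width = n} := Nat.sInf_mem hne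
  have hcount : ∀ t : D.ι,
      indepNumOn G {j | ∃ w ∈ (Hj j).verts, w ∈ D.bag t} ≤ (D.bag t).ncard := by
    intro t
    refine csSup_le ⟨0, ⟨∅, by simp, by simp [IsIndepSet], rfl⟩⟩ ?_
    rintro n ⟨s, hs, hind, rfl⟩
    rcases s.eq_empty_or_nonempty with rfl | ⟨j0, hj0⟩
    · simp
    have hj0' : ∃ w ∈ (Hj j0).verts, w ∈ D.bag t := hs hj0
    obtain ⟨w0, -, -⟩ := hj0' 
    set g : J → W := fun j =>
      if h : ∃ w ∈ (Hj j).verts, w ∈ D.bag t then h.choose else w0 with hg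
    have hmem : ∀ j ∈ (↑s : Set J), g j ∈ D.bag t := by
      intro j hj
      have h : ∃ w ∈ (Hj j).verts, w ∈ D.bag t := hs hj
      simp only [hg, dif_pos h]
      exact h.choose_spec.2
    have hverts : ∀ j ∈ (↑s : Set J), g j ∈ (Hj j).verts := by
      intro j hj
      have h : ∃ w ∈ (Hj j).verts, w ∈ D.bag t := hs hj
      simp only [hg, dif_pos h]
      exact h.choose_spec.1
    have hinj : Set.InjOn g (↑s : Set J) := by
      intro i hi j hj hij
      by_contra hne'
      exact (hind hi hj hne') ((hG i j).2 ⟨hne', g i, hverts i hi, hij ▸ hverts j hj⟩)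
    calc s.card = (↑s : Set J).ncard := (Set.ncard_coe_finset s).symm
      _ ≤ (D.bag t).ncard := Set.ncard_le_ncard_of_injOn g hmem hinj (Set.toFinite _)
  have halpha : (intersectionTD H Hj hconn G hG D).alpha ≤ D.width + 1 := by
    have hM : ∀ t : D.ι, (D.bag t).ncard ≤ sSup {n | ∃ t : D.ι, n = (D.bag t).ncard} := by
      intro t
      have hb : BddAbove {n | ∃ t : D.ι, n = (D.bag t).ncard} := by
        refine ⟨Fintype.card W, ?_⟩
        rintro n ⟨t', rfl⟩
        simpa [Set.ncard_univ] using Set.ncard_le_ncard (Set.subset_univ (D.bag t')) (Set.toFinite _)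
      exact le_csSup hb ⟨t, rfl⟩
    obtain ⟨t0⟩ : Nonempty D.ι := D.isTree.isConnected.nonempty
    unfold TreeDecomp.alpha
    simp only [intersectionTD]
    refine csSup_le ⟨_, ⟨t0, rfl⟩⟩ ?_
    rintro n ⟨t, rfl⟩
    have h1 := hcount t
    have h2 := hM t
    unfold TreeDecomp.width
    omega
  have hle : treeIndepNum G ≤ (intersectionTD H Hj hconn G hG D).alpha := by
    apply Nat.sInf_le
    exact ⟨_, rfl⟩
  calc treeIndepNum G ≤ (intersectionTD H Hj hconn G hG D).alpha := hle
    _ ≤ D.width + 1 := halpha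
    _ = treewidth H + 1 := by rw [hD]

end PaperTIN
end

section
/- For any two positive integers m ≤ n, tree-α(L(K_{m,n})) = m. -/
/-
Common definitions: tree decompositions, tree-independence number, treewidth,
independence/clique numbers, induced-subgraph freeness, and the special graphs
appearing in the paper "Treewidth versus clique number: induced minors,
distance to block graphs ... (tree-independence number)".
-/

namespace PaperTIN

open SimpleGraph

variable {V W : Type}

namespace TreeInfra

open SimpleGraph Walk

variable {ι : Type} {T : SimpleGraph ι}

noncomputable local instance : DecidableEq ι := Classical.decEq ι

/-- The unique path between two vertices of a tree. -/
noncomputable def pth (hT : T.IsTree) (u v : ι) : T.Walk u v :=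
  (hT.existsUnique_path u v).exists.choose

lemma pth_isPath (hT : T.IsTree) (u v : ι) : (pth hT u v).IsPath :=
  (hT.existsUnique_path u v).exists.choose_spec

lemma pth_unique (hT : T.IsTree) {u v : ι} {p : T.Walk u v} (hp : p.IsPath) :
    p = pth hT u v :=
  ((hT.existsUnique_path u v).unique hp (pth_isPath hT u v))

/-- support of the unique path, as a set -/
def sup (hT : T.IsTree) (u v : ι) : Set ι := {x | x ∈ (pth hT u v).support}

lemma left_mem_sup (hT : T.IsTree) (u v : ι) : u ∈ sup hT u v := start_mem_support _
lemma right_mem_sup (hT : T.IsTree) (u v : ι) : v ∈ sup hT u v := end_mem_support _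

lemma pth_self (hT : T.IsTree) (u : ι) : pth hT u u = Walk.nil :=
  (pth_unique hT IsPath.nil).symm

lemma sup_self (hT : T.IsTree) (u : ι) : sup hT u u = {u} := by
  simp [sup, pth_self]

noncomputable def dd (hT : T.IsTree) (u v : ι) : ℕ := (pth hT u v).length

lemma dd_self (hT : T.IsTree) (u : ι) : dd hT u u = 0 := by simp [dd, pth_self]

lemma pth_symm (hT : T.IsTree) (u v : ι) : pth hT v u = (pth hT u v).reverse :=
  (pth_unique hT ((pth_isPath hT u v).reverse)).symm

lemma sup_symm (hT : T.IsTree) (u v : ι) : sup hT v u = sup hT u v := by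
  ext x; simp [sup, pth_symm hT u v]

lemma dd_symm (hT : T.IsTree) (u v : ι) : dd hT v u = dd hT u v := by
  simp [dd, pth_symm hT u v]

lemma pth_split (hT : T.IsTree) {u v w : ι} (h : w ∈ sup hT u v) :
    (pth hT u v) = (pth hT u w).append (pth hT w v) ∧
      sup hT u w ⊆ sup hT u v ∧ sup hT w v ⊆ sup hT u v ∧
      dd hT u v = dd hT u w + dd hT w v := by
  have hp := pth_isPath hT u v
  have hmem : w ∈ (pth hT u v).support := h
  have ht : ((pth hT u v).takeUntil w hmem) = pth hT u w :=
    pth_unique hT (hp.takeUntil hmem)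
  have hd : ((pth hT u v).dropUntil w hmem) = pth hT w v :=
    pth_unique hT (hp.dropUntil hmem)
  have hspec := Walk.take_spec (pth hT u v) hmem
  rw [ht, hd] at hspec
  refine ⟨hspec.symm, ?_, ?_, ?_⟩
  · intro x hx
    have := support_takeUntil_subset (pth hT u v) hmem
    rw [ht] at this; exact this hx
  · intro x hx
    have := support_dropUntil_subset (pth hT u v) hmem
    rw [hd] at this; exact this hx
  · have := congrArg Walk.length hspec
    rw [Walk.length_append] at this
    exact this.symm

lemma sup_split (hT : T.IsTree) {u v w : ι} (h : w ∈ sup hT u v) :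
    sup hT u v = sup hT u w ∪ sup hT w v := by
  obtain ⟨heq, h1, h2, _⟩ := pth_split hT h
  apply Set.Subset.antisymm
  · intro x hx
    have : x ∈ ((pth hT u w).append (pth hT w v)).support := by rw [← heq]; exact hx
    rcases (Walk.mem_support_append_iff _ _).1 this with h' | h'
    · exact Or.inl h'
    · exact Or.inr h'
  · intro x hx; rcases hx with h' | h'
    · exact h1 h'
    · exact h2 h'

lemma sup_triangle (hT : T.IsTree) (u v w : ι) :
    sup hT u w ⊆ sup hT u v ∪ sup hT v w := by
  intro x hx
  have hb : ((pth hT u v).append (pth hT v w)).bypass = pth hT u w :=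
    pth_unique hT (Walk.bypass_isPath _)
  have : x ∈ ((pth hT u v).append (pth hT v w)).bypass.support := by rw [hb]; exact hx
  have := Walk.support_bypass_subset _ this
  rcases (Walk.mem_support_append_iff _ _).1 this with h' | h'
  · exact Or.inl h'
  · exact Or.inr h'

lemma dd_triangle (hT : T.IsTree) (u v w : ι) :
    dd hT u w ≤ dd hT u v + dd hT v w := by
  have hb : ((pth hT u v).append (pth hT v w)).bypass = pth hT u w :=
    pth_unique hT (Walk.bypass_isPath _)
  have := Walk.length_bypass_le ((pth hT u v).append (pth hT v w))
  rw [hb, Walk.length_append] at this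
  exact this

lemma pth_adj (hT : T.IsTree) {u v : ι} (h : T.Adj u v) :
    pth hT u v = Walk.cons h Walk.nil := by
  refine (pth_unique hT ?_).symm
  simp [Walk.isPath_def, h.ne]

lemma sup_adj (hT : T.IsTree) {u v : ι} (h : T.Adj u v) :
    sup hT u v = {u, v} := by
  rw [sup]; ext x; simp [pth_adj hT h]

lemma dd_adj (hT : T.IsTree) {u v : ι} (h : T.Adj u v) : dd hT u v = 1 := by
  simp [dd, pth_adj hT h]

lemma dd_eq_zero (hT : T.IsTree) {u v : ι} (h : dd hT u v = 0) : u = v :=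
  Walk.eq_of_length_eq_zero h

/-- A set of tree nodes is path-closed: it contains the unique path between
any two of its elements. -/
def PC (hT : T.IsTree) (S : Set ι) : Prop :=
  ∀ u ∈ S, ∀ v ∈ S, sup hT u v ⊆ S

lemma PC.inter {hT : T.IsTree} {S S' : Set ι} (h : PC hT S) (h' : PC hT S') :
    PC hT (S ∩ S') := fun u hu v hv x hx =>
  ⟨h u hu.1 v hv.1 hx, h' u hu.2 v hv.2 hx⟩

lemma PC.iInter {hT : T.IsTree} {κ : Sort*} {f : κ → Set ι} (h : ∀ i, PC hT (f i)) :
    PC hT (⋂ i, f i) := fun u hu v hv x hx => by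
  simp only [Set.mem_iInter] at hu hv ⊢
  exact fun i => h i u (hu i) v (hv i) hx

lemma PC_sup (hT : T.IsTree) (u v : ι) : PC hT (sup hT u v) := by
  intro s hs t ht x hx
  have hsplit := sup_split hT hs   -- sup u v = sup u s ∪ sup s v
  rcases (sup_split hT ht ▸ ht : t ∈ sup hT u v) with _
  -- we argue: t ∈ sup u v; cases on t ∈ sup u s or t ∈ sup s v
  have ht' : t ∈ sup hT u s ∪ sup hT s v := by rw [← hsplit]; exact ht
  rcases ht' with h' | h'
  · -- t ∈ sup u s, so sup s t ⊆ sup s u = sup u s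
    have h'' : t ∈ sup hT s u := by rwa [sup_symm]
    have := (pth_split hT h'').2.1  -- sup s t ⊆ sup s u
    have hx' := this hx
    rw [sup_symm] at hx'
    rw [hsplit]; exact Or.inl hx'
  · have := (pth_split hT h').2.1  -- sup s t ⊆ sup s v
    have hx' := this hx
    rw [hsplit]; exact Or.inr hx'

/-- From a walk in an induced subgraph, get a walk in the ambient graph with
support inside the set. -/
lemma exists_walk_of_induce {S : Set ι} :
    ∀ {x y : S} (_ : (T.induce S).Walk x y),
      ∃ p : T.Walk x y, ∀ z ∈ p.support, z ∈ S := by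
  intro x y w
  induction w with
  | nil => exact ⟨Walk.nil, by simp [Subtype.coe_prop]⟩
  | @cons a b c h q ih =>
    obtain ⟨p, hp⟩ := ih
    have h' : T.Adj a b := h
    exact ⟨Walk.cons h' p, by
      intro z hz
      rcases List.mem_cons.1 (by simpa using hz) with rfl | hz'
      · exact a.2
      · exact hp _ hz'⟩

lemma PC_of_connected {hT : T.IsTree} {S : Set ι}
    (h : (T.induce S).Connected) : PC hT S := by
  intro u hu v hv x hx
  obtain ⟨w⟩ := h.preconnected ⟨u, hu⟩ ⟨v, hv⟩
  obtain ⟨p, hp⟩ := exists_walk_of_induce w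
  have hb : p.bypass = pth hT u v := pth_unique hT (Walk.bypass_isPath p)
  have : x ∈ p.bypass.support := by rw [hb]; exact hx
  exact hp _ (Walk.support_bypass_subset p this)

/-- the side of edge (a,b) containing b -/
def Side (hT : T.IsTree) (a b : ι) : Set ι := {t | b ∈ sup hT a t}

lemma right_mem_Side (hT : T.IsTree) {a b : ι} (h : T.Adj a b) :
    b ∈ Side hT a b := right_mem_sup hT a b

lemma left_not_mem_Side (hT : T.IsTree) {a b : ι} (h : T.Adj a b) :
    a ∉ Side hT a b := by
  intro hmem
  have : b ∈ ({a} : Set ι) := by rw [← sup_self hT a]; exact hmem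
  exact h.ne (Set.mem_singleton_iff.1 this).symm

lemma Side_partition (hT : T.IsTree) {a b : ι} (h : T.Adj a b) (t : ι) :
    t ∈ Side hT a b ↔ t ∉ Side hT b a := by
  constructor
  · intro h1 h2
    have e1 := (pth_split hT h1).2.2.2  -- dd a t = dd a b + dd b t
    have e2 := (pth_split hT h2).2.2.2  -- dd b t = dd b a + dd a t
    rw [dd_adj hT h] at e1
    rw [dd_adj hT h.symm] at e2
    omega
  · intro h2
    -- a ∉ sup b t, so cons is a path
    have hpath : (Walk.cons h (pth hT b t)).IsPath := by
      refine (pth_isPath hT b t).cons ?_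
      exact h2
    have := pth_unique hT hpath
    show b ∈ sup hT a t
    rw [sup, ← this]
    simp

lemma crossing (hT : T.IsTree) {a b : ι} (h : T.Adj a b) {S : Set ι} (hS : PC hT S)
    {u w : ι} (hu : u ∈ S) (hw : w ∈ S)
    (hu' : u ∉ Side hT a b) (hw' : w ∈ Side hT a b) : a ∈ S ∧ b ∈ S := by
  constructor
  · -- a ∈ sup b u ⊆ sup b w ∪ sup w u, a ∉ sup b w
    have hau : a ∈ sup hT b u := by
      by_contra hc
      exact hu' ((Side_partition hT h u).2 hc)
    have haw : a ∉ sup hT b w := (Side_partition hT h w).1 hw'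
    rcases sup_triangle hT b w u hau with h' | h'
    · exact absurd h' haw
    · exact hS w hw u hu h'
  · have hbw : b ∈ sup hT a w := hw'
    have hbu : b ∉ sup hT a u := hu'
    rcases sup_triangle hT a u w hbw with h' | h'
    · exact absurd h' hbu
    · exact hS u hu w hw h'

lemma not_mem_sup_of_side (hT : T.IsTree) {a b : ι} (h : T.Adj a b) {s t : ι}
    (hs : s ∈ Side hT a b) (ht : t ∈ Side hT a b) : a ∉ sup hT s t := by
  intro ha
  have e1 := (pth_split hT ha).2.2.2  -- dd s t = dd s a + dd a t
  have e2 := (pth_split hT (hs : b ∈ sup hT a s)).2.2.2  -- dd a s = 1 + dd b s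
  have e3 := (pth_split hT (ht : b ∈ sup hT a t)).2.2.2
  rw [dd_adj hT h] at e2 e3
  have e4 := dd_triangle hT s b t
  have e5 : dd hT s a = dd hT a s := (dd_symm hT s a).symm
  have e6 : dd hT s b = dd hT b s := (dd_symm hT s b).symm
  omega

lemma PC_Side (hT : T.IsTree) {a b : ι} (h : T.Adj a b) : PC hT (Side hT a b) := by
  intro s hs t ht x hx
  by_contra hxn
  have hab := crossing hT h (PC_sup hT s t) hx (left_mem_sup hT s t) hxn hs
  exact not_mem_sup_of_side hT h hs ht hab.1

lemma exists_first {X : Set ι} : ∀ {u v : ι} (p : T.Walk u v), v ∈ X →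
    ∃ w, w ∈ X ∧ ∃ (q : T.Walk u w) (r : T.Walk w v), p = q.append r ∧
      ∀ z ∈ q.support, z ∈ X → z = w := by
  intro u v p
  induction p with
  | nil =>
    intro hv
    exact ⟨_, hv, Walk.nil, Walk.nil, rfl, by intro z hz _; simpa using hz⟩
  | @cons a b c h p' ih =>
    intro hv
    by_cases ha : a ∈ X
    · exact ⟨a, ha, Walk.nil, Walk.cons h p', by simp, by simp⟩
    · obtain ⟨w, hw, q, r, heq, hfirst⟩ := ih hv
      refine ⟨w, hw, Walk.cons h q, r, by simp [heq], ?_⟩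
      intro z hz hzX
      rcases List.mem_cons.1 (by simpa using hz) with rfl | hz'
      · exact absurd hzX ha
      · exact hfirst z hz' hzX

lemma helly3 (hT : T.IsTree) {A B C : Set ι} (hA : PC hT A) (hB : PC hT B)
    (hC : PC hT C) (hAB : (A ∩ B).Nonempty) (hAC : (A ∩ C).Nonempty)
    (hBC : (B ∩ C).Nonempty) : (A ∩ B ∩ C).Nonempty := by
  obtain ⟨c, hcA, hcB⟩ := hAB
  obtain ⟨b, hbA, hbC⟩ := hAC
  obtain ⟨a, haB, haC⟩ := hBC
  have hXC : sup hT a b ⊆ C := hC a haC b hbC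
  obtain ⟨w, hwX, q, r, heq, hfirst⟩ :=
    exists_first (X := sup hT a b) (pth hT c a) (left_mem_sup hT a b)
  have hqr : (q.append r).IsPath := by rw [← heq]; exact pth_isPath hT c a
  have hq : q.IsPath := hqr.of_append_left
  have hwB : w ∈ B := by
    have hsub : q.support ⊆ (pth hT c a).support := by
      intro z hz
      rw [heq]
      exact (Walk.mem_support_append_iff _ _).2 (Or.inl hz)
    exact hB c hcB a haB (hsub (Walk.end_mem_support q))
  have hwC : w ∈ C := hXC hwX
  have hsupwb : sup hT w b ⊆ sup hT a b := (pth_split hT hwX).2.2.1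
  -- the walk q.append (pth w b) is a path from c to b
  have hdisj : ∀ z ∈ q.support, z ∉ (pth hT w b).support.tail := by
    intro z hzq hzt
    have hzs : z ∈ (pth hT w b).support := by
      rw [Walk.support_eq_cons]; exact List.mem_cons_of_mem _ hzt
    have hzX : z ∈ sup hT a b := hsupwb hzs
    have hzw : z = w := hfirst z hzq hzX
    rw [hzw] at hzt
    have hnod : (pth hT w b).support.Nodup := (pth_isPath hT w b).support_nodup
    rw [Walk.support_eq_cons] at hnod
    exact (List.nodup_cons.1 hnod).1 hzt
  have hpath : (q.append (pth hT w b)).IsPath := by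
    apply Walk.IsPath.mk'
    rw [Walk.support_append]
    exact List.Nodup.append hq.support_nodup
      (by
        have : (pth hT w b).support.Nodup := (pth_isPath hT w b).support_nodup
        rw [Walk.support_eq_cons] at this
        exact (List.nodup_cons.1 this).2)
      (fun z hz hz' => hdisj z hz hz')
  have hwA : w ∈ A := by
    have : q.append (pth hT w b) = pth hT c b := pth_unique hT hpath
    have hwmem : w ∈ sup hT c b := by
      rw [sup, ← this]
      exact (Walk.mem_support_append_iff _ _).2 (Or.inl (Walk.end_mem_support q))
    exact hA c hcA b hbA hwmem
  exact ⟨w, ⟨hwA, hwB⟩, hwC⟩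

lemma helly (hT : T.IsTree) : ∀ (k : ℕ), 0 < k → ∀ (f : Fin k → Set ι),
    (∀ i, PC hT (f i)) → (∀ i j, (f i ∩ f j).Nonempty) →
    (⋂ i, f i).Nonempty := by
  intro k
  induction k with
  | zero => omega
  | succ k ih =>
    intro _ f hPC hpair
    rcases Nat.eq_zero_or_pos k with rfl | hk
    · obtain ⟨x, hx⟩ := hpair 0 0
      exact ⟨x, by
        simp only [Set.mem_iInter]
        intro i
        have : i = 0 := Fin.ext (by omega)
        rw [this]; exact hx.1⟩
    · set g : Fin k → Set ι := fun i => f i.castSucc ∩ f (Fin.last k) with hg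
      have hPC' : ∀ i, PC hT (g i) := fun i => (hPC _).inter (hPC _)
      have hpair' : ∀ i j, (g i ∩ g j).Nonempty := by
        intro i j
        obtain ⟨x, hx⟩ := helly3 hT (hPC i.castSucc) (hPC j.castSucc)
          (hPC (Fin.last k)) (hpair _ _) (hpair _ _) (hpair _ _)
        exact ⟨x, ⟨⟨hx.1.1, hx.2⟩, ⟨hx.1.2, hx.2⟩⟩⟩
      obtain ⟨x, hx⟩ := ih hk g hPC' hpair'
      simp only [Set.mem_iInter] at hx
      refine ⟨x, ?_⟩
      simp only [Set.mem_iInter]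
      intro j
      induction j using Fin.lastCases with
      | last => exact (hx ⟨0, hk⟩).2
      | cast i => exact (hx i).1

lemma exists_second (hT : T.IsTree) {t s : ι} (h : t ≠ s) :
    ∃ x, T.Adj t x ∧ x ∈ sup hT t s := by
  cases hp : pth hT t s with
  | nil => exact absurd rfl h
  | cons hadj q =>
    refine ⟨_, hadj, ?_⟩
    rw [sup, hp]
    simp

lemma side_disjoint (hT : T.IsTree) {t x x' : ι} (hx : T.Adj t x) (hx' : T.Adj t x')
    (hne : x ≠ x') {z : ι} (hz : z ∈ Side hT t x) (hz' : z ∈ Side hT t x') : False := by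
  have e1 := (pth_split hT (hz : x ∈ sup hT t z)).2.2.2
  have e2 := (pth_split hT (hz' : x' ∈ sup hT t z)).2.2.2
  rw [dd_adj hT hx] at e1
  rw [dd_adj hT hx'] at e2
  have hx'mem : x' ∈ sup hT t x ∪ sup hT x z := by
    rw [← sup_split hT (hz : x ∈ sup hT t z)]; exact hz'
  have hx'notedge : x' ∉ sup hT t x := by
    rw [sup_adj hT hx]
    intro hmem
    rcases hmem with h' | h'
    · exact hx'.ne h'.symm
    · exact hne h'.symm
  have hx'mem2 : x' ∈ sup hT x z := hx'mem.resolve_left hx'notedge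
  have e3 := (pth_split hT hx'mem2).2.2.2
  have : dd hT x x' = 0 := by omega
  exact hne (dd_eq_zero hT this)

lemma subset_side (hT : T.IsTree) {S : Set ι} (hS : PC hT S) {t : ι} (ht : t ∉ S)
    {s : ι} (hs : s ∈ S) : ∃ x, T.Adj t x ∧ S ⊆ Side hT t x := by
  have hts : t ≠ s := fun h => ht (h ▸ hs)
  obtain ⟨x, hadj, hxsup⟩ := exists_second hT hts
  refine ⟨x, hadj, ?_⟩
  intro s' hs'
  by_contra hc
  have hsSide : s ∈ Side hT t x := hxsup
  have := crossing hT hadj hS hs' hs hc hsSide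
  exact ht this.1

lemma tri_cover (hT : T.IsTree) {S : Set ι} (hPC : PC hT S) {a b : ι} (hab : T.Adj a b) :
    S ⊆ Side hT a b ∨ S ⊆ Side hT b a ∨ (a ∈ S ∧ b ∈ S) := by
  by_cases h1 : S ⊆ Side hT a b
  · exact Or.inl h1
  by_cases h2 : S ⊆ Side hT b a
  · exact Or.inr (Or.inl h2)
  rw [Set.not_subset] at h1 h2
  obtain ⟨z, hzS, hz⟩ := h1
  obtain ⟨w, hwS, hw⟩ := h2
  have hw' : w ∈ Side hT a b := (Side_partition hT hab w).2 hw
  exact Or.inr (Or.inr (crossing hT hab hPC hzS hwS hz hw'))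

section Sink

variable (hT : T.IsTree) (Ori : ι → ι → Prop)

lemma exists_sink_aux
    (hxor : ∀ {a b : ι}, T.Adj a b → (Ori a b ↔ ¬ Ori b a)) :
    ∀ (n : ℕ) (H : Finset ι), H.card ≤ n → H.Nonempty → PC hT ↑H →
    (∀ g ∈ H, ∀ y, y ∉ H → T.Adj g y → Ori y g) →
    ∃ t, ∀ x, T.Adj t x → Ori x t := by
  classical
  intro n
  induction n with
  | zero =>
    intro H hcard hne _ _
    obtain ⟨u, hu⟩ := hne
    have := Finset.card_pos.2 ⟨u, hu⟩
    omega
  | succ n ih =>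
    intro H hcard hne hPC hQ
    obtain ⟨u, hu⟩ := hne
    by_cases hsink : ∀ x, T.Adj u x → Ori x u
    · exact ⟨u, hsink⟩
    · push_neg at hsink
      obtain ⟨x, hadj, hnot⟩ := hsink
      have hux : Ori u x := (hxor hadj).2 hnot
      have hxH : x ∈ H := by
        by_contra hc
        exact hnot (hQ u hu x hc hadj)
      set H' : Finset ι := H.filter (· ∈ Side hT u x) with hH'
      have hxH' : x ∈ H' := by
        rw [hH', Finset.mem_filter]
        exact ⟨hxH, right_mem_Side hT hadj⟩
      have hPC' : PC hT ↑H' := by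
        have : (↑H' : Set ι) = ↑H ∩ Side hT u x := by
          ext z; simp [hH', Finset.mem_filter]
        rw [this]
        exact hPC.inter (PC_Side hT hadj)
      have hcard' : H'.card ≤ n := by
        have hsub : H' ⊆ H := Finset.filter_subset _ _
        have huH' : u ∉ H' := by
          rw [hH', Finset.mem_filter]
          rintro ⟨-, hc⟩
          exact left_not_mem_Side hT hadj hc
        have : H'.card < H.card := Finset.card_lt_card ⟨hsub, fun hc => huH' (hc hu)⟩
        omega
      have hQ' : ∀ g ∈ H', ∀ y, y ∉ H' → T.Adj g y → Ori y g := by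
        intro g hg y hy hgy
        have hgH : g ∈ H := (Finset.mem_filter.1 hg).1
        have hgSide : g ∈ Side hT u x := (Finset.mem_filter.1 hg).2
        by_cases hyH : y ∈ H
        · -- y ∈ H but y ∉ H' : y ∉ Side u x
          have hySide : y ∉ Side hT u x := by
            intro hc
            exact hy (Finset.mem_filter.2 ⟨hyH, hc⟩)
          have hcross := crossing hT hadj (PC_sup hT y g)
            (left_mem_sup hT y g) (right_mem_sup hT y g) hySide hgSide
          have hsupeq : sup hT y g = {y, g} := sup_adj hT hgy.symm
          have hu' : u = y := by
            rcases (hsupeq ▸ hcross.1 : u ∈ ({y, g} : Set ι)) with h' | h'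
            · exact h'
            · exact absurd (h' ▸ hgSide) (left_not_mem_Side hT hadj)
          have hx' : x = g := by
            rcases (hsupeq ▸ hcross.2 : x ∈ ({y, g} : Set ι)) with h' | h'
            · exact absurd (h' ▸ hy) (fun hc => hc hxH')
            · exact h'
          rw [← hu', ← hx']
          exact hux
        · exact hQ g hgH y hyH hgy
      exact ih H' hcard' ⟨x, hxH'⟩ hPC' hQ'

/-- Main sink lemma: if each oriented edge has a witness PC set fully on its
target side, drawn from a finite family of nonempty PC sets, then there is a
node all of whose incident edges point towards it. -/
lemma exists_sink {K : ℕ} (hK : 0 < K) (S : Fin K → Set ι)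
    (hSne : ∀ i, (S i).Nonempty) (hSPC : ∀ i, PC hT (S i))
    (hxor : ∀ {a b : ι}, T.Adj a b → (Ori a b ↔ ¬ Ori b a))
    (hwit : ∀ g y, T.Adj g y → Ori g y → ∃ i, S i ⊆ Side hT g y) :
    ∃ t, ∀ x, T.Adj t x → Ori x t := by
  classical
  choose r hr using hSne
  set z : ι := r ⟨0, hK⟩ with hz
  set H : Finset ι := Finset.univ.biUnion
    (fun i : Fin K => (pth hT z (r i)).support.toFinset) with hH
  have hmemH : ∀ w (i : Fin K), w ∈ sup hT z (r i) → w ∈ H := by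
    intro w i hw
    rw [hH]
    exact Finset.mem_biUnion.2 ⟨i, Finset.mem_univ i, List.mem_toFinset.2 hw⟩
  have hHmem : ∀ w, w ∈ H → ∃ i, w ∈ sup hT z (r i) := by
    intro w hw
    rw [hH] at hw
    obtain ⟨i, -, hi⟩ := Finset.mem_biUnion.1 hw
    exact ⟨i, List.mem_toFinset.1 hi⟩
  have hPCH : PC hT ↑H := by
    intro a ha b hb w hw
    obtain ⟨i, hai⟩ := hHmem a ha
    obtain ⟨j, hbj⟩ := hHmem b hb
    have h1 : sup hT a z ⊆ sup hT z (r i) := by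
      rw [sup_symm]
      exact (pth_split hT hai).2.1
    have h2 : sup hT z b ⊆ sup hT z (r j) := (pth_split hT hbj).2.1
    rcases sup_triangle hT a z b hw with h' | h'
    · exact hmemH w i (h1 h')
    · exact hmemH w j (h2 h')
  have hQ : ∀ g ∈ H, ∀ y, y ∉ H → T.Adj g y → Ori y g := by
    intro g hg y hy hgy
    by_contra hc
    have hOri : Ori g y := (hxor hgy).2 hc
    obtain ⟨i, hSi⟩ := hwit g y hgy hOri
    have hri : r i ∈ Side hT g y := hSi (hr i)
    have hriH : r i ∈ H := hmemH (r i) i (right_mem_sup hT z (r i))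
    have hgSide : g ∉ Side hT g y := left_not_mem_Side hT hgy
    have hcross := crossing hT hgy hPCH hg (Finset.mem_coe.2 hriH) hgSide hri
    exact hy (Finset.mem_coe.1 hcross.2)
  have hne : H.Nonempty := ⟨z, hmemH z ⟨0, hK⟩ (left_mem_sup hT z _)⟩
  exact exists_sink_aux hT Ori hxor H.card H le_rfl hne hPCH hQ

end Sink

end TreeInfra

variable {m n : ℕ}

lemma biclique_adj_lr (i : Fin m) (j : Fin n) :
    (biclique m n).Adj (Sum.inl i) (Sum.inr j) := by
  simp [biclique, completeBipartiteGraph]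

def cell (i : Fin m) (j : Fin n) : (biclique m n).edgeSet :=
  ⟨s(Sum.inl i, Sum.inr j), (biclique m n).mem_edgeSet.2 (biclique_adj_lr i j)⟩

lemma cell_inj {i i' : Fin m} {j j' : Fin n} (h : cell i j = cell i' j') :
    i = i' ∧ j = j' := by
  have := congrArg Subtype.val h
  simp only [cell] at this
  rw [Sym2.eq_iff] at this
  rcases this with ⟨h1, h2⟩ | ⟨h1, h2⟩
  · exact ⟨Sum.inl.inj h1, Sum.inr.inj h2⟩
  · exact absurd h1 (by simp)

lemma cell_surj (v : (biclique m n).edgeSet) : ∃ i j, v = cell i j := by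
  obtain ⟨e, he⟩ := v
  induction e with
  | _ a b =>
    rw [SimpleGraph.mem_edgeSet] at he
    rcases he with ⟨h1, h2⟩ | ⟨h1, h2⟩
    · obtain ⟨i, rfl⟩ := Sum.isLeft_iff.1 h1
      obtain ⟨j, rfl⟩ := Sum.isRight_iff.1 h2
      exact ⟨i, j, rfl⟩
    · obtain ⟨j, rfl⟩ := Sum.isRight_iff.1 h1
      obtain ⟨i, rfl⟩ := Sum.isLeft_iff.1 h2
      exact ⟨i, j, Subtype.ext (Sym2.eq_swap)⟩

lemma cell_adj {i i' : Fin m} {j j' : Fin n} :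
    (SimpleGraph.lineGraph (biclique m n)).Adj (cell i j) (cell i' j') ↔
      (¬ (i = i' ∧ j = j')) ∧ (i = i' ∨ j = j') := by
  rw [SimpleGraph.lineGraph_adj_iff_exists]
  constructor
  · rintro ⟨hne, v, hv1, hv2⟩
    constructor
    · rintro ⟨rfl, rfl⟩; exact hne rfl
    · simp only [cell, Sym2.mem_iff] at hv1 hv2
      rcases hv1 with rfl | rfl <;> rcases hv2 with h | h <;>
        simp_all
  · rintro ⟨hne, hor⟩
    refine ⟨fun hc => hne ⟨(cell_inj hc).1, (cell_inj hc).2⟩, ?_⟩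
    rcases hor with rfl | rfl
    · exact ⟨Sum.inl i, by simp [cell], by simp [cell]⟩
    · exact ⟨Sum.inr j, by simp [cell], by simp [cell]⟩

/-- any independent set in the line graph of the biclique has size at most m -/
lemma indep_card_le (s : Finset (biclique m n).edgeSet)
    (hs : IsIndepSet (SimpleGraph.lineGraph (biclique m n)) ↑s) : s.card ≤ m := by
  classical
  have hsurj : ∀ v : (biclique m n).edgeSet, ∃ p : Fin m × Fin n, v = cell p.1 p.2 := by
    intro v; obtain ⟨i, j, h⟩ := cell_surj v; exact ⟨(i, j), h⟩
  choose f hf using hsurj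
  have hginj : Function.Injective (fun v : {v // v ∈ s} => (f v.1).1) := by
    intro a b hab
    by_contra hne
    have hne' : a.1 ≠ b.1 := fun hc => hne (Subtype.ext hc)
    have hnadj := hs (Finset.mem_coe.2 a.2) (Finset.mem_coe.2 b.2) hne'
    apply hnadj
    rw [hf a.1, hf b.1, cell_adj]
    refine ⟨?_, Or.inl hab⟩
    rintro ⟨h1, h2⟩
    exact hne' (by rw [hf a.1, hf b.1, Prod.ext h1 h2])
  have := Fintype.card_le_of_injective _ hginj
  simpa using this


section MainProof

open TreeInfra

variable {m n : ℕ}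

lemma main_lower (hm : 0 < m) (hmn : m ≤ n)
    (D : TreeDecomp (SimpleGraph.lineGraph (biclique m n))) :
    ∃ t : D.ι, ∃ s : Finset (biclique m n).edgeSet,
      ↑s ⊆ D.bag t ∧ IsIndepSet (SimpleGraph.lineGraph (biclique m n)) ↑s ∧
      s.card = m := by
  classical
  by_contra hcon
  push_neg at hcon
  have hT := D.isTree
  have hn : 0 < n := lt_of_lt_of_le hm hmn
  set Tv : (biclique m n).edgeSet → Set D.ι := fun v => {t | v ∈ D.bag t} with hTv
  have hTvPC : ∀ v, PC hT (Tv v) := fun v => PC_of_connected (D.bag_conn v)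
  have hTvne : ∀ v, (Tv v).Nonempty := fun v => D.bag_vert v
  set Trow : Fin m → Set D.ι := fun i => ⋂ j : Fin n, Tv (cell i j) with hTrowdef
  set Tcol : Fin n → Set D.ι := fun j => ⋂ i : Fin m, Tv (cell i j) with hTcoldef
  have hTrowPC : ∀ i, PC hT (Trow i) := fun i => PC.iInter (fun j => hTvPC _)
  have hTcolPC : ∀ j, PC hT (Tcol j) := fun j => PC.iInter (fun i => hTvPC _)
  have hTrowne : ∀ i, (Trow i).Nonempty := by
    intro i
    apply helly hT n hn (fun j => Tv (cell i j)) (fun j => hTvPC _)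
    intro j j'
    by_cases h : j = j'
    · subst h; obtain ⟨t, ht⟩ := hTvne (cell i j); exact ⟨t, ht, ht⟩
    · have hadj : (SimpleGraph.lineGraph (biclique m n)).Adj (cell i j) (cell i j') := by
        rw [cell_adj]; exact ⟨fun hc => h hc.2, Or.inl rfl⟩
      obtain ⟨t, h1, h2⟩ := D.bag_edge hadj
      exact ⟨t, h1, h2⟩
  have hTcolne : ∀ j, (Tcol j).Nonempty := by
    intro j
    apply helly hT m hm (fun i => Tv (cell i j)) (fun i => hTvPC _)
    intro i i'
    by_cases h : i = i'
    · subst h; obtain ⟨t, ht⟩ := hTvne (cell i j); exact ⟨t, ht, ht⟩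
    · have hadj : (SimpleGraph.lineGraph (biclique m n)).Adj (cell i j) (cell i' j) := by
        rw [cell_adj]; exact ⟨fun hc => h hc.1, Or.inr rfl⟩
      obtain ⟨t, h1, h2⟩ := D.bag_edge hadj
      exact ⟨t, h1, h2⟩
  have hTrow_sub : ∀ (i : Fin m) (j : Fin n), Trow i ⊆ Tv (cell i j) :=
    fun i j => Set.iInter_subset _ j
  have hTcol_sub : ∀ (j : Fin n) (i : Fin m), Tcol j ⊆ Tv (cell i j) :=
    fun j i => Set.iInter_subset _ i
  set avail : D.ι → Fin m → Finset (Fin n) :=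
    fun t i => Finset.univ.filter (fun j => cell i j ∈ D.bag t) with havail
  have hall_contra : ∀ t : D.ι,
      (∀ s : Finset (Fin m), s.card ≤ (s.biUnion (avail t)).card) → False := by
    intro t hhall
    obtain ⟨f, hfinj, hf⟩ :=
      (Finset.all_card_le_biUnion_card_iff_exists_injective (avail t)).1 hhall
    have hfmem : ∀ i, cell i (f i) ∈ D.bag t := by
      intro i
      have h := hf i
      rw [havail] at h
      exact (Finset.mem_filter.1 h).2
    set s : Finset (biclique m n).edgeSet :=
      Finset.univ.image (fun i => cell i (f i)) with hs
    have hcellinj : Function.Injective (fun i : Fin m => cell i (f i)) := by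
      intro a b hab
      exact (cell_inj hab).1
    refine hcon t s ?_ ?_ ?_
    · intro v hv
      obtain ⟨i, -, rfl⟩ := Finset.mem_image.1 (Finset.mem_coe.1 hv)
      exact hfmem i
    · intro u hu v hv huv
      obtain ⟨i, -, rfl⟩ := Finset.mem_image.1 (Finset.mem_coe.1 hu)
      obtain ⟨i', -, rfl⟩ := Finset.mem_image.1 (Finset.mem_coe.1 hv)
      rw [cell_adj]
      rintro ⟨hne, h | h⟩
      · exact hne ⟨h, congrArg f h⟩
      · exact hne ⟨hfinj h, h⟩
    · rw [hs, Finset.card_image_of_injective _ hcellinj, Finset.card_univ, Fintype.card_fin]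
  -- edge classification
  set rowsIn : D.ι → D.ι → Finset (Fin m) :=
    fun a b => Finset.univ.filter (fun i => Trow i ⊆ Side hT a b) with hrowsIn
  set colsIn : D.ι → D.ι → Finset (Fin n) :=
    fun a b => Finset.univ.filter (fun j => Tcol j ⊆ Side hT a b) with hcolsIn
  set rowX : D.ι → D.ι → Finset (Fin m) :=
    fun a b => Finset.univ.filter (fun i => a ∈ Trow i ∧ b ∈ Trow i) with hrowX
  set colX : D.ι → D.ι → Finset (Fin n) :=
    fun a b => Finset.univ.filter (fun j => a ∈ Tcol j ∧ b ∈ Tcol j) with hcolX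
  have hrowXsymm : ∀ a b, rowX a b = rowX b a := by
    intro a b; rw [hrowX]; ext i; simp [and_comm]
  have hcolXsymm : ∀ a b, colX a b = colX b a := by
    intro a b; rw [hcolX]; ext j; simp [and_comm]
  have hrowtri : ∀ a b, D.tree.Adj a b → ∀ i : Fin m,
      i ∈ rowsIn a b ∨ i ∈ rowsIn b a ∨ i ∈ rowX a b := by
    intro a b hab i
    rcases tri_cover hT (hTrowPC i) hab with h | h | h
    · left; rw [hrowsIn]; simp only [Finset.mem_filter, Finset.mem_univ, true_and]; exact h
    · right; left; rw [hrowsIn]; simp only [Finset.mem_filter, Finset.mem_univ, true_and]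
      exact h
    · right; right; rw [hrowX]; simp only [Finset.mem_filter, Finset.mem_univ, true_and]
      exact h
  have hcoltri : ∀ a b, D.tree.Adj a b → ∀ j : Fin n,
      j ∈ colsIn a b ∨ j ∈ colsIn b a ∨ j ∈ colX a b := by
    intro a b hab j
    rcases tri_cover hT (hTcolPC j) hab with h | h | h
    · left; rw [hcolsIn]; simp only [Finset.mem_filter, Finset.mem_univ, true_and]; exact h
    · right; left; rw [hcolsIn]; simp only [Finset.mem_filter, Finset.mem_univ, true_and]
      exact h
    · right; right; rw [hcolX]; simp only [Finset.mem_filter, Finset.mem_univ, true_and]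
      exact h
  have hrowdisj1 : ∀ a b, D.tree.Adj a b → ∀ i, i ∈ rowsIn a b → i ∉ rowsIn b a := by
    intro a b hab i h1 h2
    rw [hrowsIn] at h1 h2
    simp only [Finset.mem_filter, Finset.mem_univ, true_and] at h1 h2
    obtain ⟨z, hz⟩ := hTrowne i
    exact (Side_partition hT hab z).1 (h1 hz) (h2 hz)
  have hrowdisj2 : ∀ a b, D.tree.Adj a b → ∀ i, i ∈ rowsIn a b → i ∉ rowX a b := by
    intro a b hab i h1 h2
    rw [hrowsIn] at h1; rw [hrowX] at h2
    simp only [Finset.mem_filter, Finset.mem_univ, true_and] at h1 h2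
    exact left_not_mem_Side hT hab (h1 h2.1)
  have hcoldisj1 : ∀ a b, D.tree.Adj a b → ∀ j, j ∈ colsIn a b → j ∉ colsIn b a := by
    intro a b hab j h1 h2
    rw [hcolsIn] at h1 h2
    simp only [Finset.mem_filter, Finset.mem_univ, true_and] at h1 h2
    obtain ⟨z, hz⟩ := hTcolne j
    exact (Side_partition hT hab z).1 (h1 hz) (h2 hz)
  have hcoldisj2 : ∀ a b, D.tree.Adj a b → ∀ j, j ∈ colsIn a b → j ∉ colX a b := by
    intro a b hab j h1 h2
    rw [hcolsIn] at h1; rw [hcolX] at h2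
    simp only [Finset.mem_filter, Finset.mem_univ, true_and] at h1 h2
    exact left_not_mem_Side hT hab (h1 h2.1)
  have hcards_row : ∀ a b, D.tree.Adj a b →
      (rowsIn a b).card + (rowsIn b a).card + (rowX a b).card = m := by
    intro a b hab
    have hdAB : Disjoint (rowsIn a b) (rowsIn b a) :=
      Finset.disjoint_left.2 (fun {i} hi h1 => hrowdisj1 a b hab i hi h1)
    have hdAX : Disjoint (rowsIn a b) (rowX a b) :=
      Finset.disjoint_left.2 (fun {i} hi h1 => hrowdisj2 a b hab i hi h1)
    have hdBX : Disjoint (rowsIn b a) (rowX a b) := by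
      rw [hrowXsymm a b]
      exact Finset.disjoint_left.2 (fun {i} hi h1 => hrowdisj2 b a hab.symm i hi h1)
    have hunion : rowsIn a b ∪ rowsIn b a ∪ rowX a b = Finset.univ := by
      apply Finset.eq_univ_of_forall
      intro i
      rcases hrowtri a b hab i with h | h | h
      · exact Finset.mem_union_left _ (Finset.mem_union_left _ h)
      · exact Finset.mem_union_left _ (Finset.mem_union_right _ h)
      · exact Finset.mem_union_right _ h
    have h1 : (rowsIn a b ∪ rowsIn b a ∪ rowX a b).card = m := by
      rw [hunion, Finset.card_univ, Fintype.card_fin]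
    rw [Finset.card_union_of_disjoint (by
        rw [Finset.disjoint_union_left]; exact ⟨hdAX, hdBX⟩),
      Finset.card_union_of_disjoint hdAB] at h1
    exact h1
  have hcards_col : ∀ a b, D.tree.Adj a b →
      (colsIn a b).card + (colsIn b a).card + (colX a b).card = n := by
    intro a b hab
    have hdAB : Disjoint (colsIn a b) (colsIn b a) :=
      Finset.disjoint_left.2 (fun {j} hj h1 => hcoldisj1 a b hab j hj h1)
    have hdAX : Disjoint (colsIn a b) (colX a b) :=
      Finset.disjoint_left.2 (fun {j} hj h1 => hcoldisj2 a b hab j hj h1)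
    have hdBX : Disjoint (colsIn b a) (colX a b) := by
      rw [hcolXsymm a b]
      exact Finset.disjoint_left.2 (fun {j} hj h1 => hcoldisj2 b a hab.symm j hj h1)
    have hunion : colsIn a b ∪ colsIn b a ∪ colX a b = Finset.univ := by
      apply Finset.eq_univ_of_forall
      intro j
      rcases hcoltri a b hab j with h | h | h
      · exact Finset.mem_union_left _ (Finset.mem_union_left _ h)
      · exact Finset.mem_union_left _ (Finset.mem_union_right _ h)
      · exact Finset.mem_union_right _ h
    have h1 : (colsIn a b ∪ colsIn b a ∪ colX a b).card = n := by
      rw [hunion, Finset.card_univ, Fintype.card_fin]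
    rw [Finset.card_union_of_disjoint (by
        rw [Finset.disjoint_union_left]; exact ⟨hdAX, hdBX⟩),
      Finset.card_union_of_disjoint hdAB] at h1
    exact h1
  -- bag membership lemmas
  have hL1 : ∀ (a : D.ι) (i : Fin m), a ∈ Trow i → ∀ j, cell i j ∈ D.bag a :=
    fun a i ha j => hTrow_sub i j ha
  have hL1c : ∀ (a : D.ι) (j : Fin n), a ∈ Tcol j → ∀ i, cell i j ∈ D.bag a :=
    fun a j ha i => hTcol_sub j i ha
  have hL3 : ∀ a b, D.tree.Adj a b → ∀ (i : Fin m) (j : Fin n),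
      i ∈ rowsIn b a → j ∈ colsIn a b →
      cell i j ∈ D.bag a ∧ cell i j ∈ D.bag b := by
    intro a b hab i j hi hj
    rw [hrowsIn] at hi; rw [hcolsIn] at hj
    simp only [Finset.mem_filter, Finset.mem_univ, true_and] at hi hj
    obtain ⟨z, hz⟩ := hTrowne i
    obtain ⟨w, hw⟩ := hTcolne j
    have hzS : z ∉ Side hT a b := (Side_partition hT hab.symm z).1 (hi hz)
    have hwS : w ∈ Side hT a b := hj hw
    exact crossing hT hab (hTvPC (cell i j)) (hTrow_sub i j hz) (hTcol_sub j i hw) hzS hwS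
  -- per-edge dichotomy
  have hdich : ∀ a b, D.tree.Adj a b →
      (colsIn b a).card + (colX a b).card + 1 ≤ (rowsIn a b).card ∨
      (colsIn a b).card + (colX a b).card + 1 ≤ (rowsIn b a).card := by
    intro a b hab
    by_contra hcd
    push_neg at hcd
    obtain ⟨hc1, hc2⟩ := hcd
    apply hall_contra a
    intro s
    have hmemavail : ∀ (i : Fin m) (j : Fin n), cell i j ∈ D.bag a → j ∈ avail a i := by
      intro i j hcij
      rw [havail]
      simp only [Finset.mem_filter, Finset.mem_univ, true_and]
      exact hcij
    by_cases hX : ∃ i ∈ s, i ∈ rowX a b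
    · obtain ⟨i, hi, hiX⟩ := hX
      have haTrow : a ∈ Trow i := by
        rw [hrowX] at hiX
        simp only [Finset.mem_filter, Finset.mem_univ, true_and] at hiX
        exact hiX.1
      have hsubU : (Finset.univ : Finset (Fin n)) ⊆ s.biUnion (avail a) := by
        intro j _
        exact Finset.mem_biUnion.2 ⟨i, hi, hmemavail i j (hL1 a i haTrow j)⟩
      calc s.card ≤ (Finset.univ : Finset (Fin m)).card := Finset.card_le_univ s
        _ = m := by simp
        _ ≤ n := hmn
        _ = (Finset.univ : Finset (Fin n)).card := by simp
        _ ≤ (s.biUnion (avail a)).card := Finset.card_le_card hsubU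
    · push_neg at hX
      by_cases hAB : (∃ i ∈ s, i ∈ rowsIn b a) ∧ (∃ i' ∈ s, i' ∈ rowsIn a b)
      · obtain ⟨⟨i, hi, hiA⟩, ⟨i', hi', hiB⟩⟩ := hAB
        have hsubU : (Finset.univ : Finset (Fin n)) ⊆ s.biUnion (avail a) := by
          intro j _
          rcases hcoltri a b hab j with hj | hj | hj
          · exact Finset.mem_biUnion.2 ⟨i, hi, hmemavail i j (hL3 a b hab i j hiA hj).1⟩
          · exact Finset.mem_biUnion.2 ⟨i', hi', hmemavail i' j (hL3 b a hab.symm i' j hiB hj).2⟩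
          · have haTcol : a ∈ Tcol j := by
              rw [hcolX] at hj
              simp only [Finset.mem_filter, Finset.mem_univ, true_and] at hj
              exact hj.1
            exact Finset.mem_biUnion.2 ⟨i, hi, hmemavail i j (hL1c a j haTcol i)⟩
        calc s.card ≤ (Finset.univ : Finset (Fin m)).card := Finset.card_le_univ s
          _ = m := by simp
          _ ≤ n := hmn
          _ = (Finset.univ : Finset (Fin n)).card := by simp
          _ ≤ (s.biUnion (avail a)).card := Finset.card_le_card hsubU
      · rcases Finset.eq_empty_or_nonempty s with rfl | ⟨i0, hi0⟩
        · simp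
        rw [not_and_or] at hAB
        rcases hAB with hnoA | hnoB
        · push_neg at hnoA
          have hssub : s ⊆ rowsIn a b := by
            intro i hi
            rcases hrowtri a b hab i with h | h | h
            · exact h
            · exact absurd h (hnoA i hi)
            · exact absurd h (hX i hi)
          have havsub : (colsIn b a) ∪ (colX a b) ⊆ s.biUnion (avail a) := by
            intro j hj
            rcases Finset.mem_union.1 hj with hj' | hj'
            · exact Finset.mem_biUnion.2
                ⟨i0, hi0, hmemavail i0 j (hL3 b a hab.symm i0 j (hssub hi0) hj').2⟩
            · have haTcol : a ∈ Tcol j := by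
                rw [hcolX] at hj'
                simp only [Finset.mem_filter, Finset.mem_univ, true_and] at hj'
                exact hj'.1
              exact Finset.mem_biUnion.2 ⟨i0, hi0, hmemavail i0 j (hL1c a j haTcol i0)⟩
          have hdisjcc : Disjoint (colsIn b a) (colX a b) := by
            rw [hcolXsymm a b]
            exact Finset.disjoint_left.2 (fun {j} hj h1 => hcoldisj2 b a hab.symm j hj h1)
          calc s.card ≤ (rowsIn a b).card := Finset.card_le_card hssub
            _ ≤ (colsIn b a).card + (colX a b).card := by omega
            _ = ((colsIn b a) ∪ (colX a b)).card :=
                (Finset.card_union_of_disjoint hdisjcc).symm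
            _ ≤ (s.biUnion (avail a)).card := Finset.card_le_card havsub
        · push_neg at hnoB
          have hssub : s ⊆ rowsIn b a := by
            intro i hi
            rcases hrowtri a b hab i with h | h | h
            · exact absurd h (hnoB i hi)
            · exact h
            · exact absurd h (hX i hi)
          have havsub : (colsIn a b) ∪ (colX a b) ⊆ s.biUnion (avail a) := by
            intro j hj
            rcases Finset.mem_union.1 hj with hj' | hj'
            · exact Finset.mem_biUnion.2
                ⟨i0, hi0, hmemavail i0 j (hL3 a b hab i0 j (hssub hi0) hj').1⟩
            · have haTcol : a ∈ Tcol j := by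
                rw [hcolX] at hj'
                simp only [Finset.mem_filter, Finset.mem_univ, true_and] at hj'
                exact hj'.1
              exact Finset.mem_biUnion.2 ⟨i0, hi0, hmemavail i0 j (hL1c a j haTcol i0)⟩
          have hdisjcc : Disjoint (colsIn a b) (colX a b) :=
            Finset.disjoint_left.2 (fun {j} hj h1 => hcoldisj2 a b hab j hj h1)
          calc s.card ≤ (rowsIn b a).card := Finset.card_le_card hssub
            _ ≤ (colsIn a b).card + (colX a b).card := by omega
            _ = ((colsIn a b) ∪ (colX a b)).card :=
                (Finset.card_union_of_disjoint hdisjcc).symm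
            _ ≤ (s.biUnion (avail a)).card := Finset.card_le_card havsub
  -- orientation
  set Ori : D.ι → D.ι → Prop :=
    fun a b => (colsIn b a).card + (colX a b).card + 1 ≤ (rowsIn a b).card with hOri
  have hxor : ∀ {a b : D.ι}, D.tree.Adj a b → (Ori a b ↔ ¬ Ori b a) := by
    intro a b hab
    constructor
    · intro h1 h2
      have h1' : (colsIn b a).card + (colX a b).card + 1 ≤ (rowsIn a b).card := h1
      have h2' : (colsIn a b).card + (colX b a).card + 1 ≤ (rowsIn b a).card := h2
      have hr := hcards_row a b hab
      have hc := hcards_col a b hab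
      have hx2 : (colX b a).card = (colX a b).card := by rw [hcolXsymm b a]
      omega
    · intro h2
      rcases hdich a b hab with h | h
      · exact h
      · exfalso
        apply h2
        have h' : (colsIn a b).card + (colX b a).card + 1 ≤ (rowsIn b a).card := by
          rw [hcolXsymm b a]; exact h
        exact h'
  obtain ⟨t, hsink⟩ := exists_sink hT Ori hm Trow hTrowne hTrowPC
    (fun {a b} hab => hxor hab)
    (by
      intro g y hgy hOgy
      have hOgy' : (colsIn y g).card + (colX g y).card + 1 ≤ (rowsIn g y).card := hOgy
      have hpos : 0 < (rowsIn g y).card := by omega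
      obtain ⟨i, hi⟩ := Finset.card_pos.1 hpos
      rw [hrowsIn] at hi
      simp only [Finset.mem_filter, Finset.mem_univ, true_and] at hi
      exact ⟨i, hi⟩)
  -- final Hall argument at the sink
  apply hall_contra t
  intro s
  have hmemavail : ∀ (i : Fin m) (j : Fin n), cell i j ∈ D.bag t → j ∈ avail t i := by
    intro i j hcij
    rw [havail]
    simp only [Finset.mem_filter, Finset.mem_univ, true_and]
    exact hcij
  by_cases hthrough : ∃ i ∈ s, t ∈ Trow i
  · obtain ⟨i, hi, hit⟩ := hthrough
    have hsubU : (Finset.univ : Finset (Fin n)) ⊆ s.biUnion (avail t) := by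
      intro j _
      exact Finset.mem_biUnion.2 ⟨i, hi, hmemavail i j (hL1 t i hit j)⟩
    calc s.card ≤ (Finset.univ : Finset (Fin m)).card := Finset.card_le_univ s
      _ = m := by simp
      _ ≤ n := hmn
      _ = (Finset.univ : Finset (Fin n)).card := by simp
      _ ≤ (s.biUnion (avail t)).card := Finset.card_le_card hsubU
  · push_neg at hthrough
    rcases Finset.eq_empty_or_nonempty s with rfl | ⟨i0, hi0⟩
    · simp
    have hbr : ∀ i ∈ s, ∃ x, D.tree.Adj t x ∧ Trow i ⊆ Side hT t x := by
      intro i hi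
      exact subset_side hT (hTrowPC i) (hthrough i hi) (hTrowne i).some_mem
    have hbr' : ∀ i : Fin m, ∃ x, (i ∈ s → (D.tree.Adj t x ∧ Trow i ⊆ Side hT t x)) := by
      intro i
      by_cases hi : i ∈ s
      · obtain ⟨x, h1, h2⟩ := hbr i hi
        exact ⟨x, fun _ => ⟨h1, h2⟩⟩
      · exact ⟨t, fun h => absurd h hi⟩
    choose xb hxb using hbr'
    have hxbadj : ∀ i ∈ s, D.tree.Adj t (xb i) := fun i hi => (hxb i hi).1
    have hxbsub : ∀ i ∈ s, Trow i ⊆ Side hT t (xb i) := fun i hi => (hxb i hi).2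
    have hcellmem : ∀ i ∈ s, ∀ j : Fin n,
        ¬ (Tcol j ⊆ Side hT t (xb i)) → cell i j ∈ D.bag t := by
      intro i hi j hj
      by_cases htc : t ∈ Tcol j
      · exact hTcol_sub j i htc
      · obtain ⟨x', hx'adj, hx'sub⟩ :=
          subset_side hT (hTcolPC j) htc (hTcolne j).some_mem
        have hnex : xb i ≠ x' := fun hc => hj (by rw [hc]; exact hx'sub)
        obtain ⟨w, hw⟩ := hTcolne j
        obtain ⟨z, hz⟩ := hTrowne i
        have hwS : w ∉ Side hT t (xb i) := fun hc =>
          side_disjoint hT (hxbadj i hi) hx'adj hnex hc (hx'sub hw)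
        exact (crossing hT (hxbadj i hi) (hTvPC (cell i j)) (hTcol_sub j i hw)
          (hTrow_sub i j hz) hwS (hxbsub i hi hz)).1
    by_cases h2br : ∃ i ∈ s, ∃ i' ∈ s, xb i ≠ xb i'
    · obtain ⟨i, hi, i', hi', hne2⟩ := h2br
      have hsubU : (Finset.univ : Finset (Fin n)) ⊆ s.biUnion (avail t) := by
        intro j _
        by_cases hj : Tcol j ⊆ Side hT t (xb i)
        · have hj' : ¬ (Tcol j ⊆ Side hT t (xb i')) := by
            intro hc
            obtain ⟨w, hw⟩ := hTcolne j
            exact side_disjoint hT (hxbadj i hi) (hxbadj i' hi') hne2 (hj hw) (hc hw)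
          exact Finset.mem_biUnion.2 ⟨i', hi', hmemavail i' j (hcellmem i' hi' j hj')⟩
        · exact Finset.mem_biUnion.2 ⟨i, hi, hmemavail i j (hcellmem i hi j hj)⟩
      calc s.card ≤ (Finset.univ : Finset (Fin m)).card := Finset.card_le_univ s
        _ = m := by simp
        _ ≤ n := hmn
        _ = (Finset.univ : Finset (Fin n)).card := by simp
        _ ≤ (s.biUnion (avail t)).card := Finset.card_le_card hsubU
    · push_neg at h2br
      have hallx : ∀ i ∈ s, xb i = xb i0 := fun i hi => h2br i hi i0 hi0
      have hadjx : D.tree.Adj t (xb i0) := hxbadj i0 hi0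
      have hOxt0 : Ori (xb i0) t := hsink (xb i0) hadjx
      have hOxt : (colsIn t (xb i0)).card + (colX (xb i0) t).card + 1
          ≤ (rowsIn (xb i0) t).card := hOxt0
      have hr := hcards_row (xb i0) t hadjx.symm
      have hssub : s ⊆ rowsIn t (xb i0) := by
        intro i hi
        rw [hrowsIn]
        simp only [Finset.mem_filter, Finset.mem_univ, true_and]
        rw [← hallx i hi]
        exact hxbsub i hi
      have havsub : Finset.univ.filter (fun j => j ∉ colsIn t (xb i0)) ⊆
          s.biUnion (avail t) := by
        intro j hj
        have hj' : ¬ (Tcol j ⊆ Side hT t (xb i0)) := by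
          have := (Finset.mem_filter.1 hj).2
          rw [hcolsIn] at this
          simp only [Finset.mem_filter, Finset.mem_univ, true_and] at this
          exact this
        refine Finset.mem_biUnion.2 ⟨i0, hi0, ?_⟩
        exact hmemavail i0 j (hcellmem i0 hi0 j hj')
      have hcard1 : (Finset.univ.filter (fun j => j ∉ colsIn t (xb i0))).card
          = n - (colsIn t (xb i0)).card := by
        have heq : Finset.univ.filter (fun j => j ∈ colsIn t (xb i0)) = colsIn t (xb i0) := by
          ext j; simp
        have h2 := Finset.card_filter_add_card_filter_not
          (s := (Finset.univ : Finset (Fin n))) (p := fun j => j ∈ colsIn t (xb i0))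
        rw [heq] at h2
        have h3 : (Finset.univ : Finset (Fin n)).card = n := by simp
        omega
      have hcolle : (colsIn t (xb i0)).card ≤ n := by
        calc (colsIn t (xb i0)).card ≤ (Finset.univ : Finset (Fin n)).card :=
              Finset.card_le_univ _
          _ = n := by simp
      calc s.card ≤ (rowsIn t (xb i0)).card := Finset.card_le_card hssub
        _ ≤ n - (colsIn t (xb i0)).card := by omega
        _ = (Finset.univ.filter (fun j => j ∉ colsIn t (xb i0))).card := hcard1.symm
        _ ≤ (s.biUnion (avail t)).card := Finset.card_le_card havsub

end MainProof

section Assembly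

open TreeInfra

variable {m n : ℕ}

lemma indepNumOn_le_m (S : Set (biclique m n).edgeSet) :
    indepNumOn (SimpleGraph.lineGraph (biclique m n)) S ≤ m := by
  apply csSup_le
  · exact ⟨0, ∅, by simp, by simp [IsIndepSet], rfl⟩
  · rintro k ⟨f, hsub, hind, rfl⟩
    exact indep_card_le f hind

lemma alpha_eq (hm : 0 < m) (hmn : m ≤ n)
    (D : TreeDecomp (SimpleGraph.lineGraph (biclique m n))) : D.alpha = m := by
  obtain ⟨t0, s0, hsub, hind, hcard⟩ := main_lower hm hmn D
  have hto : indepNumOn (SimpleGraph.lineGraph (biclique m n)) (D.bag t0) = m := by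
    refine le_antisymm (indepNumOn_le_m _) ?_
    refine le_csSup ⟨m, ?_⟩ ⟨s0, hsub, hind, hcard⟩
    rintro k ⟨f, hs, hi, rfl⟩
    exact indep_card_le f hi
  refine le_antisymm ?_ ?_
  · apply csSup_le
    · obtain ⟨t⟩ : Nonempty D.ι := D.isTree.isConnected.nonempty
      exact ⟨_, t, rfl⟩
    · rintro k ⟨t, rfl⟩
      exact indepNumOn_le_m _
  · refine le_csSup ⟨m, ?_⟩ ⟨t0, hto.symm⟩
    rintro k ⟨t, rfl⟩
    exact indepNumOn_le_m _

def trivDecomp {V : Type} (G : SimpleGraph V) : TreeDecomp G where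
  ι := Unit
  tree := ⊥
  isTree := by
    constructor
    · rw [SimpleGraph.connected_iff]
      refine ⟨fun u v => ?_, ⟨()⟩⟩
      rw [Subsingleton.elim u v]
    · intro v c hc
      cases c with
      | nil => exact hc.ne_nil rfl
      | cons h p => simp at h
  bag := fun _ => Set.univ
  bag_vert := fun v => ⟨(), trivial⟩
  bag_edge := fun u v _ => ⟨(), trivial, trivial⟩
  bag_conn := fun v => by
    rw [SimpleGraph.connected_iff]
    refine ⟨fun a b => ?_, ⟨⟨(), trivial⟩⟩⟩
    rw [Subsingleton.elim a b]

end Assembly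

/-- For any two positive integers `m ≤ n`,
`tree-α(L(K_{m,n})) = m`. -/
theorem treeIndepNum_lineGraph_biclique
    (m n : ℕ) (hm : 0 < m) (hmn : m ≤ n) :
    treeIndepNum (SimpleGraph.lineGraph (biclique m n)) = m := by
  have hset : {k | ∃ D : TreeDecomp (SimpleGraph.lineGraph (biclique m n)), D.alpha = k}
      = {m} := by
    ext k
    simp only [Set.mem_setOf_eq, Set.mem_singleton_iff]
    constructor
    · rintro ⟨D, rfl⟩
      exact alpha_eq hm hmn D
    · rintro rfl
      exact ⟨trivDecomp _, alpha_eq hm hmn _⟩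
  rw [treeIndepNum, hset, csInf_singleton]

end PaperTIN
end
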